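/- arXiv:1610.05250 — 2 statements merged into one kernel-verified Lean document; each statement's English description precedes it below -/
import Mathlib

section
/- Let T be a finite tree and let D be a diametral path of T. If some vertex v on D has at least three distinct neighbors that do not lie on D (i.e. at least three protrusions from v), then Γ_b(T) > diam(T); in particular T is not diametrical. -/
open SimpleGraph Finset

/-- `S` is a dominating set of `G`: every vertex is in `S` or adjacent to a vertex of `S`. -/
def Dominates {V : Type*} (G : SimpleGraph V) (S : Finset V) : Prop :=
  ∀ v : V, v ∈ S ∨ ∃ u ∈ S, G.Adj v u

/-- `S` is a minimal dominating set: it dominates and no proper subset dominates. -/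
def MinimalDominating {V : Type*} (G : SimpleGraph V) (S : Finset V) : Prop :=
  Dominates G S ∧ ∀ S' : Finset V, S' ⊂ S → ¬ Dominates G S'

/-- The upper domination number `Γ(G)`: maximum cardinality of a minimal dominating set. -/
noncomputable def upperDomination {V : Type*} (G : SimpleGraph V) : ℕ :=
  sSup {k : ℕ | ∃ S : Finset V, MinimalDominating G S ∧ S.card = k}

/-- The domination number `γ(G)`: minimum cardinality of a dominating set. -/
noncomputable def domNumber {V : Type*} (G : SimpleGraph V) : ℕ :=
  sInf {k : ℕ | ∃ S : Finset V, Dominates G S ∧ S.card = k}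

/-- The eccentricity of `v` : maximum distance to any other vertex. -/
noncomputable def eccent {V : Type*} [Fintype V] (G : SimpleGraph V) (v : V) : ℕ :=
  Finset.univ.sup (fun u => G.dist v u)

/-- The diameter of `G` : maximum eccentricity. -/
noncomputable def gDiam {V : Type*} [Fintype V] (G : SimpleGraph V) : ℕ :=
  Finset.univ.sup (fun v => eccent G v)

/-- A broadcast on `G`: `f v ≤ e(v)` for all `v`. -/
def IsBroadcast {V : Type*} [Fintype V] (G : SimpleGraph V) (f : V → ℕ) : Prop :=
  ∀ v : V, f v ≤ _root_.eccent G v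

/-- A broadcast `f` dominates `G` if every vertex hears some broadcasting vertex. -/
def BroadcastDominates {V : Type*} (G : SimpleGraph V) (f : V → ℕ) : Prop :=
  ∀ u : V, ∃ v : V, 1 ≤ f v ∧ G.dist u v ≤ f v

/-- A minimal dominating broadcast: no broadcast `g ≤ f` with `g ≠ f` dominates `G`. -/
def MinimalDominatingBroadcast {V : Type*} [Fintype V] (G : SimpleGraph V) (f : V → ℕ) : Prop :=
  IsBroadcast G f ∧ BroadcastDominates G f ∧
    ∀ g : V → ℕ, IsBroadcast G g → g ≤ f → g ≠ f → ¬ BroadcastDominates G g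

/-- The cost of a broadcast. -/
def cost {V : Type*} [Fintype V] (f : V → ℕ) : ℕ := ∑ v, f v

/-- The upper broadcast domination number `Γ_b(G)`. -/
noncomputable def upperBroadcast {V : Type*} [Fintype V] (G : SimpleGraph V) : ℕ :=
  sSup {k : ℕ | ∃ f : V → ℕ, MinimalDominatingBroadcast G f ∧ cost f = k}

/-- The broadcast domination number `γ_b(G)`. -/
noncomputable def broadcastDomNumber {V : Type*} [Fintype V] (G : SimpleGraph V) : ℕ :=
  sInf {k : ℕ | ∃ f : V → ℕ, IsBroadcast G f ∧ BroadcastDominates G f ∧ cost f = k}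


set_option linter.unusedSectionVars false
set_option linter.unusedVariables false
set_option maxHeartbeats 1600000

section TreeMetric

variable {V : Type*} [DecidableEq V] (T : SimpleGraph V) (hT : T.IsTree)
include hT

/-- In a tree, every path between two vertices has length equal to the distance. -/
lemma tree_path_length {u v : V} (p : T.Walk u v) (hp : p.IsPath) :
    p.length = T.dist u v := by
  obtain ⟨q, hq, hqlen⟩ := hT.isConnected.exists_path_of_dist u v
  have := hT.IsAcyclic.path_unique ⟨p, hp⟩ ⟨q, hq⟩
  rw [Subtype.mk.injEq] at this
  rw [this, hqlen]

/-- L1: dichotomy for adjacent vertices in a tree. -/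
lemma tree_dist_adj {p q : V} (hpq : T.Adj p q) (w : V) :
    T.dist w p = T.dist w q + 1 ∨ T.dist w q = T.dist w p + 1 := by
  obtain ⟨P, hP, hPlen⟩ := hT.isConnected.exists_path_of_dist w p
  by_cases hq : q ∈ P.support
  · left
    have h1 : (P.takeUntil q hq).length = T.dist w q :=
      tree_path_length T hT _ (hP.takeUntil hq)
    have h2 : (P.dropUntil q hq).length = T.dist q p :=
      tree_path_length T hT _ (hP.dropUntil hq)
    have h3 : T.dist q p = 1 := by rw [SimpleGraph.dist_eq_one_iff_adj]; exact hpq.symm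
    have h4 := congrArg Walk.length (P.take_spec hq)
    rw [Walk.length_append] at h4
    omega
  · right
    have hP' : (P.append (Walk.cons hpq Walk.nil)).IsPath := by
      rw [Walk.isPath_def, Walk.support_append]
      simp only [Walk.support_cons, Walk.support_nil, List.tail_cons]
      refine List.Nodup.append hP.support_nodup (List.nodup_singleton q) ?_
      intro a ha hb
      simp only [List.mem_singleton] at hb
      subst hb; exact hq ha
    have h1 : (P.append (Walk.cons hpq Walk.nil)).length = T.dist w q :=
      tree_path_length T hT _ hP'
    rw [Walk.length_append, Walk.length_cons, Walk.length_nil] at h1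
    omega

/-- L2: cut-edge distance formula in a tree. -/
lemma tree_dist_cut {p q w x : V} (hpq : T.Adj p q)
    (hw : T.dist w p = T.dist w q + 1) (hx : T.dist x q = T.dist x p + 1) :
    T.dist w x = T.dist w q + 1 + T.dist p x := by
  obtain ⟨P1, hP1, hP1len⟩ := hT.isConnected.exists_path_of_dist w q
  obtain ⟨P2, hP2, hP2len⟩ := hT.isConnected.exists_path_of_dist p x
  -- every vertex on P1 is strictly closer to q; on P2 closer to p
  have hside1 : ∀ y ∈ P1.support, T.dist y p = T.dist y q + 1 := by
    intro y hy
    have hsplit : (P1.takeUntil y hy).length + (P1.dropUntil y hy).length = P1.length := by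
      have h4 := congrArg Walk.length (P1.take_spec hy)
      rw [Walk.length_append] at h4; omega
    have l1 : (P1.takeUntil y hy).length = T.dist w y :=
      tree_path_length T hT _ (hP1.takeUntil hy)
    have l2 : (P1.dropUntil y hy).length = T.dist y q :=
      tree_path_length T hT _ (hP1.dropUntil hy)
    rcases tree_dist_adj T hT hpq y with h | h
    · exact h
    · exfalso
      have htri : T.dist w p ≤ T.dist w y + T.dist y p :=
        hT.isConnected.dist_triangle
      omega
  have hside2 : ∀ y ∈ P2.support, T.dist y q = T.dist y p + 1 := by
    intro y hy
    have hsplit : (P2.takeUntil y hy).length + (P2.dropUntil y hy).length = P2.length := by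
      have h4 := congrArg Walk.length (P2.take_spec hy)
      rw [Walk.length_append] at h4; omega
    have l1 : (P2.takeUntil y hy).length = T.dist p y :=
      tree_path_length T hT _ (hP2.takeUntil hy)
    have l2 : (P2.dropUntil y hy).length = T.dist y x :=
      tree_path_length T hT _ (hP2.dropUntil hy)
    rcases tree_dist_adj T hT hpq y with h | h
    · exfalso
      have htri : T.dist x q ≤ T.dist x y + T.dist y q := hT.isConnected.dist_triangle
      have hcm1 : T.dist x y = T.dist y x := SimpleGraph.dist_comm ..
      have hcm2 : T.dist p y = T.dist y p := SimpleGraph.dist_comm ..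
      have hcm3 : T.dist p x = T.dist x p := SimpleGraph.dist_comm ..
      omega
    · exact h
  have hq2 : q ∉ P2.support := by
    intro hq
    have := hside2 q hq
    have h0 : T.dist q q = 0 := SimpleGraph.dist_self ..
    omega
  have hdisj : ∀ a ∈ P1.support, a ∉ P2.support := by
    intro a ha hb
    have h1 := hside1 a ha
    have h2 := hside2 a hb
    omega
  have hP' : (P1.append (Walk.cons hpq.symm P2)).IsPath := by
    rw [Walk.isPath_def, Walk.support_append, Walk.support_cons, List.tail_cons]
    exact List.Nodup.append hP1.support_nodup hP2.support_nodup hdisj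
  have hlen : (P1.append (Walk.cons hpq.symm P2)).length = T.dist w x :=
    tree_path_length T hT _ hP'
  rw [Walk.length_append, Walk.length_cons] at hlen
  omega


/-- Intermediate vertex on a geodesic. -/
lemma tree_intermediate (w z : V) (k : ℕ) (hk : k ≤ T.dist w z) :
    ∃ y, T.dist w y = k ∧ T.dist y z = T.dist w z - k := by
  obtain ⟨p, hp, hlen⟩ := hT.isConnected.exists_path_of_dist w z
  have aux : ∀ {a b : V} (q : T.Walk a b) (j : ℕ), j ≤ q.length →
      ∃ y, T.dist a y ≤ j ∧ T.dist y b ≤ q.length - j := by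
    intro a b q
    induction q with
    | @nil u =>
      intro j _
      exact ⟨u, by simp [SimpleGraph.dist_self], by simp [SimpleGraph.dist_self]⟩
    | @cons u v' z' h q ih =>
      intro j hj
      match j with
      | 0 =>
        refine ⟨u, by simp [SimpleGraph.dist_self], ?_⟩
        simpa using T.dist_le (Walk.cons h q)
      | (j+1) =>
        obtain ⟨y, hy1, hy2⟩ := ih j (by simpa [Walk.length_cons] using hj)
        refine ⟨y, ?_, by simpa [Walk.length_cons] using hy2⟩
        have htri : T.dist u y ≤ T.dist u v' + T.dist v' y := hT.isConnected.dist_triangle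
        have h1 : T.dist u v' = 1 := by rw [SimpleGraph.dist_eq_one_iff_adj]; exact h
        omega
  obtain ⟨y, hy1, hy2⟩ := aux p k (by omega)
  have htri : T.dist w z ≤ T.dist w y + T.dist y z := hT.isConnected.dist_triangle
  exact ⟨y, by omega, by omega⟩

end TreeMetric

section Branch

variable {V : Type*} [DecidableEq V] [Fintype V] (T : SimpleGraph V)

/-- The branch at the edge `(P, C)` on the side of `C`. -/
noncomputable def Br (P C : V) : Finset V := univ.filter fun w => T.dist w C < T.dist w P

lemma mem_Br {P C w : V} : w ∈ Br T P C ↔ T.dist w C < T.dist w P := by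
  simp [Br]

variable (hT : T.IsTree)
include hT

lemma br_dist {P C w : V} (hpq : T.Adj P C) (hw : w ∈ Br T P C) :
    T.dist w P = T.dist w C + 1 := by
  rw [mem_Br] at hw
  rcases tree_dist_adj T hT hpq w with h | h <;> omega

lemma br_dist_not {P C w : V} (hpq : T.Adj P C) (hw : w ∉ Br T P C) :
    T.dist w C = T.dist w P + 1 := by
  rw [mem_Br, not_lt] at hw
  rcases tree_dist_adj T hT hpq w with h | h <;> omega

lemma C_mem_Br {P C : V} (hpq : T.Adj P C) : C ∈ Br T P C := by
  rw [mem_Br, SimpleGraph.dist_self]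
  have : T.dist C P = 1 := by rw [SimpleGraph.dist_eq_one_iff_adj]; exact hpq.symm
  omega

lemma P_not_mem_Br {P C : V} (hpq : T.Adj P C) : P ∉ Br T P C := by
  rw [mem_Br, SimpleGraph.dist_self]
  omega

lemma br_cut {P C w x : V} (hpq : T.Adj P C) (hw : w ∈ Br T P C) (hx : x ∉ Br T P C) :
    T.dist w x = T.dist w C + 1 + T.dist P x :=
  tree_dist_cut T hT hpq (br_dist T hT hpq hw) (br_dist_not T hT hpq hx)

lemma child_mem_Br {P C g : V} (hpq : T.Adj P C) (hg : T.Adj C g) (hgP : g ≠ P) :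
    g ∈ Br T P C := by
  have h1 : T.dist g C = 1 := by rw [SimpleGraph.dist_eq_one_iff_adj]; exact hg.symm
  rw [mem_Br, h1]
  rcases tree_dist_adj T hT hpq g with h | h
  · omega
  · exfalso
    have : T.dist g P = 0 := by omega
    exact hgP ((hT.isConnected.dist_eq_zero_iff).mp this)

lemma P_not_mem_sub_Br {P C g : V} (hpq : T.Adj P C) (hg : T.Adj C g) (hgP : g ≠ P) :
    P ∉ Br T C g := by
  rw [mem_Br]
  have h1 : T.dist P C = 1 := by rw [SimpleGraph.dist_eq_one_iff_adj]; exact hpq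
  intro hlt
  have h0 : T.dist P g = 0 := by omega
  exact hgP ((hT.isConnected.dist_eq_zero_iff).mp h0).symm

lemma sub_Br {P C g : V} (hpq : T.Adj P C) (hg : T.Adj C g) (hgP : g ≠ P) :
    Br T C g ⊆ (Br T P C).erase C := by
  have hPg : P ∉ Br T C g := P_not_mem_sub_Br T hT hpq hg hgP
  intro w hw
  rw [Finset.mem_erase]
  constructor
  · intro hwC
    subst hwC
    rw [mem_Br] at hw
    have h1 : T.dist w g = 1 := by rw [SimpleGraph.dist_eq_one_iff_adj]; exact hg
    rw [SimpleGraph.dist_self] at hw; omega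
  · have hcut := br_cut T hT hg hw hPg
    have h2 : T.dist w C = T.dist w g + 1 := br_dist T hT hg hw
    have hcm : T.dist C P = T.dist P C := SimpleGraph.dist_comm ..
    have h1 : T.dist P C = 1 := by rw [SimpleGraph.dist_eq_one_iff_adj]; exact hpq
    rw [mem_Br]
    omega

lemma children_disjoint_Br {C g g' : V} (hg : T.Adj C g) (hg' : T.Adj C g') (hne : g ≠ g') :
    ∀ w, w ∈ Br T C g → w ∉ Br T C g' := by
  intro w hwg hwg'
  have hg'notin : g' ∉ Br T C g := by
    rw [mem_Br]
    have h1 : T.dist g' C = 1 := by rw [SimpleGraph.dist_eq_one_iff_adj]; exact hg'.symm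
    intro hlt
    have : T.dist g' g = 0 := by omega
    exact hne.symm ((hT.isConnected.dist_eq_zero_iff).mp this)
  have hcut := br_cut T hT hg hwg hg'notin
  have h2 : T.dist w C = T.dist w g + 1 := br_dist T hT hg hwg
  rw [mem_Br] at hwg'
  omega

lemma exists_child_Br {P C w : V} (hpq : T.Adj P C) (hw : w ∈ Br T P C) (hwC : w ≠ C) :
    ∃ g, T.Adj C g ∧ g ≠ P ∧ w ∈ Br T C g := by
  have hd : 1 ≤ T.dist w C := by
    have := (hT.isConnected.pos_dist_of_ne hwC)
    omega
  obtain ⟨y, hy1, hy2⟩ := tree_intermediate T hT w C (T.dist w C - 1) (by omega)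
  have hy2' : T.dist y C = 1 := by omega
  have hadj : T.Adj C y := by rw [← SimpleGraph.dist_eq_one_iff_adj, SimpleGraph.dist_comm]; exact hy2'
  refine ⟨y, hadj, ?_, ?_⟩
  · intro h; subst h
    have := br_dist T hT hpq hw
    rw [mem_Br] at hw
    omega
  · rw [mem_Br, hy1]
    omega

end Branch

section Toward

variable {V : Type*} [DecidableEq V] [Fintype V] (T : SimpleGraph V) (hT : T.IsTree)
include hT

lemma unique_toward {y Q Q' z : V} {r : ℕ} (hadj : T.Adj y Q) (hadj' : T.Adj y Q')
    (hQ : T.dist Q z = r) (hQ' : T.dist Q' z = r) (hy : T.dist y z = r + 1) : Q = Q' := by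
  by_contra hne
  have h1 : T.dist Q' y = 1 := by rw [SimpleGraph.dist_eq_one_iff_adj]; exact hadj'.symm
  have h2 : T.dist Q' Q = 2 := by
    rcases tree_dist_adj T hT hadj.symm Q' with h | h
    · omega
    · exfalso
      have h0 : T.dist Q' Q = 0 := by omega
      exact hne (((hT.isConnected.dist_eq_zero_iff).mp h0).symm)
  have hmem : Q' ∈ Br T Q y := by rw [mem_Br]; omega
  have hznot : z ∉ Br T Q y := by
    rw [mem_Br]
    have hc1 : T.dist z y = T.dist y z := SimpleGraph.dist_comm ..
    have hc2 : T.dist z Q = T.dist Q z := SimpleGraph.dist_comm ..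
    omega
  have hcut := br_cut T hT hadj.symm hmem hznot
  -- dist Q' z = dist Q' y + 1 + dist Q z
  omega

lemma toward_facts {P C z y Q : V} {r : ℕ} (hpq : T.Adj P C) (hz : z ∈ Br T P C)
    (hCz : T.dist C z ≤ r) (hy : y ∈ Br T P C) (hyz : T.dist y z = r + 1)
    (hQ : T.Adj y Q) (hQz : T.dist Q z = r) :
    (∀ w ∈ Br T Q y, T.dist w z = T.dist w y + 1 + r) ∧
    T.dist y C = T.dist Q C + 1 ∧
    C ∉ Br T Q y ∧
    Q ∈ Br T P C ∧
    Br T Q y ⊆ (Br T P C).erase C := by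
  have hznot : z ∉ Br T Q y := by
    rw [mem_Br]
    have hc1 : T.dist z y = T.dist y z := SimpleGraph.dist_comm ..
    have hc2 : T.dist z Q = T.dist Q z := SimpleGraph.dist_comm ..
    omega
  have hfact : ∀ w ∈ Br T Q y, T.dist w z = T.dist w y + 1 + r := by
    intro w hw
    have := br_cut T hT hQ.symm hw hznot
    omega
  have hyC : T.dist y C = T.dist Q C + 1 := by
    rcases tree_dist_adj T hT hQ.symm C with h | h
    · -- bad case : dist C Q = dist C y + 1, so C ∈ Br Q y
      exfalso
      have hmem : C ∈ Br T Q y := by rw [mem_Br]; omega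
      have := hfact C hmem
      have hc : T.dist C y = T.dist y C := SimpleGraph.dist_comm ..
      have hc2 : T.dist C z = T.dist C z := rfl
      omega
    · have hc1 : T.dist C y = T.dist y C := SimpleGraph.dist_comm ..
      have hc2 : T.dist C Q = T.dist Q C := SimpleGraph.dist_comm ..
      omega
  have hCnot : C ∉ Br T Q y := by
    rw [mem_Br]
    have hc1 : T.dist C y = T.dist y C := SimpleGraph.dist_comm ..
    have hc2 : T.dist C Q = T.dist Q C := SimpleGraph.dist_comm ..
    omega
  have hQmem : Q ∈ Br T P C := by
    by_contra hno
    have hcut := br_cut T hT hpq hy hno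
    have h1 : T.dist y Q = 1 := by rw [SimpleGraph.dist_eq_one_iff_adj]; exact hQ
    have h2 : T.dist y C = 0 := by omega
    have : y = C := (hT.isConnected.dist_eq_zero_iff).mp h2
    subst this
    omega
  refine ⟨hfact, hyC, hCnot, hQmem, ?_⟩
  intro w hw
  rw [Finset.mem_erase]
  refine ⟨fun hwc => hCnot (hwc ▸ hw), ?_⟩
  by_contra hno
  have hcut1 := br_cut T hT hpq hy hno
  have hcut2 := br_cut T hT hpq hQmem hno
  -- dist y w = dist y C + 1 + dist P w ; dist Q w = dist Q C + 1 + dist P w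
  rw [mem_Br] at hw
  have hc1 : T.dist y w = T.dist w y := SimpleGraph.dist_comm ..
  have hc2 : T.dist Q w = T.dist w Q := SimpleGraph.dist_comm ..
  have hc3 : T.dist y C = T.dist y C := rfl
  omega

lemma ball_out_Br {P C z w : V} (hpq : T.Adj P C) (hz : z ∈ Br T P C) (hw : w ∉ Br T P C) :
    T.dist w z = T.dist z C + 1 + T.dist P w := by
  have := br_cut T hT hpq hz hw
  have hc : T.dist z w = T.dist w z := SimpleGraph.dist_comm ..
  omega

end Toward

/-- The bundle of properties of a branch broadcast. -/
structure BrP {V : Type*} [DecidableEq V] [Fintype V] (T : SimpleGraph V) (P C : V)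
    (f : V → ℕ) : Prop where
  supp : ∀ x, f x ≠ 0 → x ∈ Br T P C
  ball : ∀ x, f x ≠ 0 → ∀ w, T.dist w x ≤ f x → w ∈ Br T P C ∨ w = P
  ballS : 1 < (Br T P C).card → ∀ x, f x ≠ 0 → ∀ w, T.dist w x ≤ f x → w ∈ Br T P C
  cov : ∀ w ∈ Br T P C, ∃ x, f x ≠ 0 ∧ T.dist w x ≤ f x
  cost1 : 1 ≤ ∑ x, f x
  costH : ∀ w ∈ Br T P C, T.dist w C ≤ ∑ x, f x
  wit : ∀ x, f x ≠ 0 → ∃ w ∈ Br T P C, (f x = 1 ∨ f x ≤ T.dist w x) ∧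
        ∀ y, y ≠ x → f y ≠ 0 → f y < T.dist w y



/-- Evaluation of a base function plus disjointly supported pieces. -/
lemma piece_eval {V : Type*} [DecidableEq V] [Fintype V]
    (I : Finset V) (F : V → V → ℕ) (R : V → Finset V) (base : V → ℕ)
    (hFsupp : ∀ c ∈ I, ∀ x, F c x ≠ 0 → x ∈ R c)
    (hRdisj : ∀ c ∈ I, ∀ c' ∈ I, c ≠ c' → ∀ x, x ∈ R c → x ∉ R c')
    (hbase : ∀ c ∈ I, ∀ x, base x ≠ 0 → x ∉ R c) :
    (∀ c ∈ I, ∀ x ∈ R c, base x + ∑ c' ∈ I, F c' x = F c x) ∧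
    (∀ x, base x ≠ 0 → base x + ∑ c' ∈ I, F c' x = base x) ∧
    (∀ x, base x + ∑ c' ∈ I, F c' x ≠ 0 → base x ≠ 0 ∨ ∃ c ∈ I, x ∈ R c ∧ F c x ≠ 0) := by
  refine ⟨?_, ?_, ?_⟩
  · intro c hc x hx
    have hb : base x = 0 := by
      by_contra hb
      exact hbase c hc x hb hx
    rw [hb, zero_add]
    refine Finset.sum_eq_single_of_mem c hc ?_
    intro b hb hbc
    by_contra hFb
    exact hRdisj b hb c hc hbc x (hFsupp b hb x hFb) hx
  · intro x hbx
    have : ∑ c' ∈ I, F c' x = 0 := by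
      refine Finset.sum_eq_zero ?_
      intro c hc
      by_contra hFc
      exact hbase c hc x hbx (hFsupp c hc x hFc)
    omega
  · intro x hx
    by_cases hb : base x = 0
    · right
      rw [hb, zero_add] at hx
      obtain ⟨c, hc, hFc⟩ := Finset.exists_ne_zero_of_sum_ne_zero hx
      exact ⟨c, hc, hFsupp c hc x hFc, hFc⟩
    · exact Or.inl hb

section Main
variable {V : Type*} [DecidableEq V] [Fintype V] (T : SimpleGraph V) (hT : T.IsTree)
include hT

theorem br_exists : ∀ (n : ℕ) (P C : V), T.Adj P C → (Br T P C).card ≤ n →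
    ∃ f : V → ℕ, BrP T P C f := by
  classical
  intro n
  induction n with
  | zero =>
    intro P C hpq hcard
    exact absurd (Finset.card_pos.mpr ⟨C, C_mem_Br T hT hpq⟩) (by omega)
  | succ n IH =>
    intro P C hpq hcard
    by_cases hsing : (Br T P C).card = 1
    · -- singleton branch : f = [C ↦ 1]
      refine ⟨fun x => if x = C then 1 else 0, ?_, ?_, ?_, ?_, ?_, ?_, ?_⟩
      · intro x hx
        have hxC : x = C := by by_contra h; simp [h] at hx
        rw [hxC]; exact C_mem_Br T hT hpq
      · intro x hx w hw
        have hxC : x = C := by by_contra h; simp [h] at hx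
        rw [hxC, if_pos rfl] at hw
        by_cases hwC : w = C
        · rw [hwC]; exact Or.inl (C_mem_Br T hT hpq)
        · by_cases hwP : w = P
          · exact Or.inr hwP
          · left
            have hd : T.dist w C = 1 := by
              have := hT.isConnected.pos_dist_of_ne hwC
              omega
            exact child_mem_Br T hT hpq
              ((SimpleGraph.dist_eq_one_iff_adj.mp hd).symm) hwP
      · intro h1; omega
      · intro w hw
        have : w = C := by
          have hC := C_mem_Br T hT hpq
          have := Finset.card_eq_one.mp hsing
          obtain ⟨a, ha⟩ := this
          rw [ha, Finset.mem_singleton] at hw hC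
          rw [hw, hC]
        refine ⟨C, by simp, ?_⟩
        rw [this]
        simp [SimpleGraph.dist_self]
      · rw [Finset.sum_ite_eq' univ C (fun _ => 1)]
        simp
      · intro w hw
        have hC := C_mem_Br T hT hpq
        obtain ⟨a, ha⟩ := Finset.card_eq_one.mp hsing
        rw [ha, Finset.mem_singleton] at hw hC
        rw [hw, hC, SimpleGraph.dist_self]
        omega
      · intro x hx
        have hxC : x = C := by by_contra h; simp [h] at hx
        refine ⟨C, C_mem_Br T hT hpq, Or.inl (by simp [hxC]), ?_⟩
        intro y hy hyne
        rw [hxC] at hy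
        simp [hy] at hyne
    · -- big branch
      have hbig : 1 < (Br T P C).card := by
        have := Finset.card_pos.mpr ⟨C, C_mem_Br T hT hpq⟩
        omega
      by_cases hpendne : (univ.filter fun g => T.Adj C g ∧ g ≠ P ∧ (Br T C g).card = 1).Nonempty
      · -- pendant-children case
        set pend := univ.filter fun g => T.Adj C g ∧ g ≠ P ∧ (Br T C g).card = 1 with hpenddef
        set npnd := univ.filter fun c => T.Adj C c ∧ c ≠ P ∧ 1 < (Br T C c).card with hnpnddef
        have hpendmem : ∀ g ∈ pend, T.Adj C g ∧ g ≠ P ∧ Br T C g = {g} := by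
          intro g hg
          rw [hpenddef, Finset.mem_filter] at hg
          obtain ⟨-, h1, h2, h3⟩ := hg
          refine ⟨h1, h2, ?_⟩
          obtain ⟨a, ha⟩ := Finset.card_eq_one.mp h3
          have := C_mem_Br T hT h1
          rw [ha, Finset.mem_singleton] at this
          rw [ha, ← this]
        have hnpndmem : ∀ c ∈ npnd, T.Adj C c ∧ c ≠ P ∧ 1 < (Br T C c).card := by
          intro c hc
          rw [hnpnddef, Finset.mem_filter] at hc
          exact hc.2
        have hchild_card : ∀ c, T.Adj C c → c ≠ P → (Br T C c).card ≤ n := by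
          intro c h1 h2
          have hsub := sub_Br T hT hpq h1 h2
          have := Finset.card_le_card hsub
          have hce := Finset.card_erase_of_mem (C_mem_Br T hT hpq)
          omega
        have hIH : ∀ c ∈ npnd, ∃ f, BrP T C c f := by
          intro c hc
          obtain ⟨h1, h2, h3⟩ := hnpndmem c hc
          exact IH C c h1 (hchild_card c h1 h2)
        choose! FF hFF using hIH
        set base : V → ℕ := fun x => if x ∈ pend then 1 else 0 with hbasedef
        set f : V → ℕ := fun x => base x + ∑ c ∈ npnd, FF c x with hfdef
        have hbase_eq : ∀ x ∈ pend, base x = 1 := by intro x hx; simp [hbasedef, hx]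
        have hbase_ne : ∀ x, base x ≠ 0 → x ∈ pend ∧ base x = 1 := by
          intro x hx
          by_cases h : x ∈ pend
          · exact ⟨h, hbase_eq x h⟩
          · simp [hbasedef, h] at hx
        -- pend disjoint from npnd regions
        have hpend_not_region : ∀ g ∈ pend, ∀ c ∈ npnd, g ∉ Br T C c := by
          intro g hg c hc
          obtain ⟨hg1, hg2, hg3⟩ := hpendmem g hg
          obtain ⟨hc1, hc2, hc3⟩ := hnpndmem c hc
          have hgc : g ≠ c := by
            intro h
            rw [h] at hg3
            rw [hg3] at hc3
            simp at hc3
          have hgmem : g ∈ Br T C g := C_mem_Br T hT hg1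
          exact children_disjoint_Br T hT hg1 hc1 hgc g hgmem
        have hPE := piece_eval npnd FF (fun c => Br T C c) base
          (fun c hc => (hFF c hc).supp)
          (fun c hc c' hc' hne => children_disjoint_Br T hT (hnpndmem c hc).1 (hnpndmem c' hc').1 hne)
          (fun c hc x hbx => hpend_not_region x (hbase_ne x hbx).1 c hc)
        obtain ⟨hEv1, hEv2, hEv3⟩ := hPE
        -- region inclusion
        have hreg_sub : ∀ c ∈ npnd, Br T C c ⊆ (Br T P C).erase C := by
          intro c hc
          obtain ⟨h1, h2, h3⟩ := hnpndmem c hc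
          exact sub_Br T hT hpq h1 h2
        have hpend_sub : ∀ g ∈ pend, g ∈ Br T P C := by
          intro g hg
          obtain ⟨h1, h2, h3⟩ := hpendmem g hg
          exact child_mem_Br T hT hpq h1 h2
        -- pendant balls : ball(g,1) = {g, C} within the tree
        have hpend_ball : ∀ g ∈ pend, ∀ w, T.dist w g ≤ 1 → w = g ∨ w = C := by
          intro g hg w hw
          obtain ⟨h1, h2, h3⟩ := hpendmem g hg
          by_cases hwg : w = g
          · exact Or.inl hwg
          · right
            have hd : T.dist w g = 1 := by
              have := hT.isConnected.pos_dist_of_ne hwg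
              omega
            have hadj : T.Adj g w := (SimpleGraph.dist_eq_one_iff_adj.mp hd).symm
            by_contra hwC
            have : w ∈ Br T C g := child_mem_Br T hT h1 hadj hwC
            rw [h3, Finset.mem_singleton] at this
            exact hwg this
        have hdist_pend_pend : ∀ g ∈ pend, ∀ g' ∈ pend, g ≠ g' → T.dist g g' = 2 := by
          intro g hg g' hg' hne
          obtain ⟨h1, -, -⟩ := hpendmem g hg
          obtain ⟨h1', -, -⟩ := hpendmem g' hg'
          have hd : T.dist g C = 1 := by
            rw [SimpleGraph.dist_eq_one_iff_adj]; exact h1.symm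
          rcases tree_dist_adj T hT h1' g with h | h
          · exfalso
            have h0 : T.dist g g' = 0 := by omega
            exact hne ((hT.isConnected.dist_eq_zero_iff).mp h0)
          · omega
        refine ⟨f, ?_, ?_, ?_, ?_, ?_, ?_, ?_⟩
        · -- supp
          intro x hx
          rcases hEv3 x hx with hb | ⟨c, hc, hxc, -⟩
          · exact hpend_sub x (hbase_ne x hb).1
          · exact Finset.mem_of_mem_erase (hreg_sub c hc hxc)
        · -- ball
          intro x hx w hw
          rcases hEv3 x hx with hb | ⟨c, hc, hxc, hFc⟩
          · obtain ⟨hxp, hb1⟩ := hbase_ne x hb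
            have hfx : f x = 1 := by rw [hfdef]; simp only; rw [hEv2 x hb, hb1]
            rw [hfx] at hw
            rcases hpend_ball x hxp w hw with h | h
            · exact Or.inl (by rw [h]; exact hpend_sub x hxp)
            · exact Or.inl (by rw [h]; exact C_mem_Br T hT hpq)
          · have hfx : f x = FF c x := hEv1 c hc x hxc
            rw [hfx] at hw
            rcases (hFF c hc).ball x hFc w hw with h | h
            · exact Or.inl (Finset.mem_of_mem_erase (hreg_sub c hc h))
            · exact Or.inl (by rw [h]; exact C_mem_Br T hT hpq)
        · -- ballS
          intro hb1 x hx w hw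
          rcases hEv3 x hx with hb | ⟨c, hc, hxc, hFc⟩
          · obtain ⟨hxp, hbv⟩ := hbase_ne x hb
            have hfx : f x = 1 := by rw [hfdef]; simp only; rw [hEv2 x hb, hbv]
            rw [hfx] at hw
            rcases hpend_ball x hxp w hw with h | h
            · rw [h]; exact hpend_sub x hxp
            · rw [h]; exact C_mem_Br T hT hpq
          · have hfx : f x = FF c x := hEv1 c hc x hxc
            rw [hfx] at hw
            rcases (hFF c hc).ball x hFc w hw with h | h
            · exact Finset.mem_of_mem_erase (hreg_sub c hc h)
            · rw [h]; exact C_mem_Br T hT hpq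
        · -- cov
          intro w hw
          obtain ⟨g0, hg0⟩ := hpendne
          by_cases hwC : w = C
          · refine ⟨g0, ?_, ?_⟩
            · have hfg : f g0 = 1 := by
                rw [hfdef]; simp only
                rw [hEv2 g0 (by rw [hbase_eq g0 hg0]; omega), hbase_eq g0 hg0]
              omega
            · have : T.dist C g0 = 1 := by
                rw [SimpleGraph.dist_eq_one_iff_adj]; exact (hpendmem g0 hg0).1
              have hfg : f g0 = 1 := by
                rw [hfdef]; simp only
                rw [hEv2 g0 (by rw [hbase_eq g0 hg0]; omega), hbase_eq g0 hg0]
              rw [hwC, hfg]; omega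
          · obtain ⟨g, hgadj, hgP, hwg⟩ := exists_child_Br T hT hpq hw hwC
            by_cases hcard1 : (Br T C g).card = 1
            · have hgpend : g ∈ pend := by
                rw [hpenddef, Finset.mem_filter]
                exact ⟨Finset.mem_univ g, hgadj, hgP, hcard1⟩
              have hBr : Br T C g = {g} := (hpendmem g hgpend).2.2
              rw [hBr, Finset.mem_singleton] at hwg
              refine ⟨g, ?_, ?_⟩
              · have hfg : f g = 1 := by
                  rw [hfdef]; simp only
                  rw [hEv2 g (by rw [hbase_eq g hgpend]; omega), hbase_eq g hgpend]
                omega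
              · rw [hwg, SimpleGraph.dist_self]
                have hfg : f g = 1 := by
                  rw [hfdef]; simp only
                  rw [hEv2 g (by rw [hbase_eq g hgpend]; omega), hbase_eq g hgpend]
                omega
            · have hgnpnd : g ∈ npnd := by
                rw [hnpnddef, Finset.mem_filter]
                have : 1 ≤ (Br T C g).card := Finset.card_pos.mpr ⟨g, C_mem_Br T hT hgadj⟩
                exact ⟨Finset.mem_univ g, hgadj, hgP, by omega⟩
              obtain ⟨x, hx1, hx2⟩ := (hFF g hgnpnd).cov w hwg
              refine ⟨x, ?_, ?_⟩
              · have : f x = FF g x := hEv1 g hgnpnd x ((hFF g hgnpnd).supp x hx1)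
                rw [this]; exact hx1
              · have : f x = FF g x := hEv1 g hgnpnd x ((hFF g hgnpnd).supp x hx1)
                rw [this]; exact hx2
        · -- cost1
          have hsum : ∑ x, f x = pend.card + ∑ c ∈ npnd, ∑ x, FF c x := by
            rw [hfdef]
            simp only
            rw [Finset.sum_add_distrib]
            congr 1
            · rw [hbasedef]
              simp only
              rw [Finset.sum_ite_mem]
              simp [Finset.univ_inter]
            · exact Finset.sum_comm
          obtain ⟨g0, hg0⟩ := hpendne
          have : 1 ≤ pend.card := Finset.card_pos.mpr ⟨g0, hg0⟩
          omega
        · -- costH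
          have hsum : ∑ x, f x = pend.card + ∑ c ∈ npnd, ∑ x, FF c x := by
            rw [hfdef]
            simp only
            rw [Finset.sum_add_distrib]
            congr 1
            · rw [hbasedef]
              simp only
              rw [Finset.sum_ite_mem]
              simp [Finset.univ_inter]
            · exact Finset.sum_comm
          obtain ⟨g0, hg0⟩ := hpendne
          have hp1 : 1 ≤ pend.card := Finset.card_pos.mpr ⟨g0, hg0⟩
          intro w hw
          by_cases hwC : w = C
          · rw [hwC, SimpleGraph.dist_self]; omega
          · obtain ⟨g, hgadj, hgP, hwg⟩ := exists_child_Br T hT hpq hw hwC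
            have hd : T.dist w C = T.dist w g + 1 := br_dist T hT hgadj hwg
            by_cases hcard1 : (Br T C g).card = 1
            · have hgpend : g ∈ pend := by
                rw [hpenddef, Finset.mem_filter]
                exact ⟨Finset.mem_univ g, hgadj, hgP, hcard1⟩
              have hBr : Br T C g = {g} := (hpendmem g hgpend).2.2
              rw [hBr, Finset.mem_singleton] at hwg
              rw [hwg] at hd ⊢
              rw [SimpleGraph.dist_self] at hd
              omega
            · have hgnpnd : g ∈ npnd := by
                rw [hnpnddef, Finset.mem_filter]
                have : 1 ≤ (Br T C g).card := Finset.card_pos.mpr ⟨g, C_mem_Br T hT hgadj⟩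
                exact ⟨Finset.mem_univ g, hgadj, hgP, by omega⟩
              have h1 := (hFF g hgnpnd).costH w hwg
              have h2 : ∑ x, FF g x ≤ ∑ c ∈ npnd, ∑ x, FF c x :=
                Finset.single_le_sum (f := fun c => ∑ x, FF c x)
                  (fun c _ => Nat.zero_le _) hgnpnd
              omega
        · -- wit
          intro x hx
          rcases hEv3 x hx with hb | ⟨c, hc, hxc, hFc⟩
          · obtain ⟨hxp, hbv⟩ := hbase_ne x hb
            have hfx : f x = 1 := by
              rw [hfdef]; simp only; rw [hEv2 x hb, hbv]
            refine ⟨x, hpend_sub x hxp, Or.inl hfx, ?_⟩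
            intro y hy hfy
            rcases hEv3 y hfy with hby | ⟨c', hc', hyc', hFy⟩
            · obtain ⟨hyp, hbyv⟩ := hbase_ne y hby
              have hfy1 : f y = 1 := by
                rw [hfdef]; simp only; rw [hEv2 y hby, hbyv]
              have := hdist_pend_pend y hyp x hxp hy
              have hcm : T.dist x y = T.dist y x := SimpleGraph.dist_comm ..
              omega
            · have hfyv : f y = FF c' y := hEv1 c' hc' y hyc'
              rw [hfyv]
              by_contra hcon
              push_neg at hcon
              rcases (hFF c' hc').ball y hFy x hcon with h | h
              · exact hpend_not_region x hxp c' hc' h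
              · obtain ⟨h1', -, -⟩ := hpendmem x hxp
                rw [h] at hxp
                -- C ∈ pend impossible : Adj C C
                obtain ⟨habs, -, -⟩ := hpendmem C hxp
                exact (T.loopless.irrefl C habs)
          · obtain ⟨w, hwreg, hwesc, hwother⟩ := (hFF c hc).wit x hFc
            have hfx : f x = FF c x := hEv1 c hc x hxc
            refine ⟨w, Finset.mem_of_mem_erase (hreg_sub c hc hwreg), ?_, ?_⟩
            · rw [hfx]; exact hwesc
            · intro y hy hfy
              rcases hEv3 y hfy with hby | ⟨c', hc', hyc', hFy⟩
              · obtain ⟨hyp, hbyv⟩ := hbase_ne y hby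
                have hfy1 : f y = 1 := by
                  rw [hfdef]; simp only; rw [hEv2 y hby, hbyv]
                -- dist w y = dist w c + 1 + dist C y ≥ 2
                obtain ⟨hy1, -, -⟩ := hpendmem y hyp
                have hynot : y ∉ Br T C c := hpend_not_region y hyp c hc
                have hcut := br_cut T hT (hnpndmem c hc).1 hwreg hynot
                have hdCy : T.dist C y = 1 := by
                  rw [SimpleGraph.dist_eq_one_iff_adj]; exact hy1
                omega
              · have hfyv : f y = FF c' y := hEv1 c' hc' y hyc'
                by_cases hcc : c' = c
                · rw [hcc] at hFy hfyv
                  rw [hfyv]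
                  exact hwother y hy hFy
                · rw [hfyv]
                  by_contra hcon
                  push_neg at hcon
                  rcases (hFF c' hc').ball y hFy w hcon with h | h
                  · exact children_disjoint_Br T hT (hnpndmem c hc).1 (hnpndmem c' hc').1
                      (fun hq => hcc hq.symm) w hwreg h
                  · rw [h] at hwreg
                    exact (by
                      have : C ∉ Br T C c := by
                        rw [mem_Br, SimpleGraph.dist_self]
                        omega
                      exact this hwreg)
      · -- no pendant children case
        rw [Finset.not_nonempty_iff_eq_empty] at hpendne
        have hnopend : ∀ g, T.Adj C g → g ≠ P → 1 < (Br T C g).card := by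
          intro g h1 h2
          have hpos : 1 ≤ (Br T C g).card := Finset.card_pos.mpr ⟨g, C_mem_Br T hT h1⟩
          rcases Nat.lt_or_ge 1 (Br T C g).card with h | h
          · exact h
          · exfalso
            have : g ∈ (univ.filter fun g => T.Adj C g ∧ g ≠ P ∧ (Br T C g).card = 1) := by
              rw [Finset.mem_filter]
              exact ⟨Finset.mem_univ g, h1, h2, by omega⟩
            rw [hpendne] at this
            exact absurd this (Finset.notMem_empty g)
        have hBne : (Br T P C).Nonempty := ⟨C, C_mem_Br T hT hpq⟩
        obtain ⟨ws, hwsmem, hwsmax⟩ :=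
          Finset.exists_max_image (Br T P C) (fun w => T.dist w C) hBne
        set h : ℕ := T.dist ws C with hhdef
        have hh1 : 1 ≤ h := by
          obtain ⟨w0, hw0mem, hw0ne⟩ := Finset.exists_mem_ne hbig C
          have := hwsmax w0 hw0mem
          have := hT.isConnected.pos_dist_of_ne hw0ne
          omega
        have hCz : T.dist C ws ≤ h := by
          have : T.dist C ws = T.dist ws C := SimpleGraph.dist_comm ..
          omega
        set Y : Finset V := (Br T P C).filter (fun y => T.dist y ws = h + 1) with hYdef
        have hYmem : ∀ y ∈ Y, y ∈ Br T P C ∧ T.dist y ws = h + 1 := by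
          intro y hy; rw [hYdef, Finset.mem_filter] at hy; exact hy
        have hQex : ∀ y ∈ Y, ∃ Q, T.Adj y Q ∧ T.dist Q ws = h := by
          intro y hy
          obtain ⟨-, hyd⟩ := hYmem y hy
          obtain ⟨Q, hq1, hq2⟩ := tree_intermediate T hT y ws 1 (by omega)
          refine ⟨Q, SimpleGraph.dist_eq_one_iff_adj.mp hq1, by omega⟩
        choose! QQ hQ1 hQ2 using hQex
        have hTF : ∀ y ∈ Y,
            (∀ w ∈ Br T (QQ y) y, T.dist w ws = T.dist w y + 1 + h) ∧
            T.dist y C = T.dist (QQ y) C + 1 ∧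
            C ∉ Br T (QQ y) y ∧
            QQ y ∈ Br T P C ∧
            Br T (QQ y) y ⊆ (Br T P C).erase C := by
          intro y hy
          obtain ⟨hyB, hyd⟩ := hYmem y hy
          exact toward_facts T hT hpq hwsmem hCz hyB hyd (hQ1 y hy) (hQ2 y hy)
        have hIH2 : ∀ y ∈ Y, ∃ f, BrP T (QQ y) y f := by
          intro y hy
          have hsub := (hTF y hy).2.2.2.2
          have hcd : (Br T (QQ y) y).card ≤ n := by
            have := Finset.card_le_card hsub
            have hce := Finset.card_erase_of_mem (C_mem_Br T hT hpq)
            omega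
          exact IH (QQ y) y (hQ1 y hy).symm hcd
        choose! FF hFF using hIH2
        set base : V → ℕ := fun x => if x = ws then h else 0 with hbasedef
        set f : V → ℕ := fun x => base x + ∑ y ∈ Y, FF y x with hfdef
        have hbase_ne : ∀ x, base x ≠ 0 → x = ws ∧ base x = h := by
          intro x hx
          by_cases hxw : x = ws
          · exact ⟨hxw, by simp [hbasedef, hxw]⟩
          · simp [hbasedef, hxw] at hx
        have hregdisj : ∀ y ∈ Y, ∀ y' ∈ Y, y ≠ y' → ∀ x, x ∈ Br T (QQ y) y → x ∉ Br T (QQ y') y' := by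
          intro y hy y' hy' hne x hx hx'
          have f1 := (hTF y hy).1 x hx
          have f1' := (hTF y' hy').1 x hx'
          have hy'notin : y' ∉ Br T (QQ y) y := by
            intro hmem
            have := (hTF y hy).1 y' hmem
            obtain ⟨-, hyd'⟩ := hYmem y' hy'
            have h0 : T.dist y' y = 0 := by omega
            exact hne (((hT.isConnected.dist_eq_zero_iff).mp h0).symm)
          have hcut := br_cut T hT (hQ1 y hy).symm hx hy'notin
          omega
        have hbase_not : ∀ y ∈ Y, ∀ x, base x ≠ 0 → x ∉ Br T (QQ y) y := by
          intro y hy x hx hmem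
          obtain ⟨hxw, -⟩ := hbase_ne x hx
          rw [hxw] at hmem
          have := (hTF y hy).1 ws hmem
          rw [SimpleGraph.dist_self] at this
          omega
        have hPE := piece_eval Y FF (fun y => Br T (QQ y) y) base
          (fun y hy => (hFF y hy).supp) hregdisj hbase_not
        obtain ⟨hEv1, hEv2, hEv3⟩ := hPE
        have hfws : f ws = h := by
          rw [hfdef]; simp only
          rw [hEv2 ws (by simp [hbasedef]; omega)]
          simp [hbasedef]
        refine ⟨f, ?_, ?_, ?_, ?_, ?_, ?_, ?_⟩
        · -- supp
          intro x hx
          rcases hEv3 x hx with hb | ⟨y, hy, hxy, -⟩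
          · rw [(hbase_ne x hb).1]; exact hwsmem
          · exact Finset.mem_of_mem_erase ((hTF y hy).2.2.2.2 hxy)
        · -- ball
          intro x hx w hw
          rcases hEv3 x hx with hb | ⟨y, hy, hxy, hFy⟩
          · obtain ⟨hxw, hbv⟩ := hbase_ne x hb
            have hfx : f x = h := by rw [hxw]; exact hfws
            rw [hfx, hxw] at hw
            left
            by_contra hwnot
            have := ball_out_Br T hT hpq hwsmem hwnot
            omega
          · have hfx : f x = FF y x := hEv1 y hy x hxy
            rw [hfx] at hw
            rcases (hFF y hy).ball x hFy w hw with hmem | heq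
            · exact Or.inl (Finset.mem_of_mem_erase ((hTF y hy).2.2.2.2 hmem))
            · exact Or.inl (by rw [heq]; exact (hTF y hy).2.2.2.1)
        · -- ballS
          intro hb1 x hx w hw
          rcases hEv3 x hx with hb | ⟨y, hy, hxy, hFy⟩
          · obtain ⟨hxw, hbv⟩ := hbase_ne x hb
            have hfx : f x = h := by rw [hxw]; exact hfws
            rw [hfx, hxw] at hw
            by_contra hwnot
            have := ball_out_Br T hT hpq hwsmem hwnot
            omega
          · have hfx : f x = FF y x := hEv1 y hy x hxy
            rw [hfx] at hw
            rcases (hFF y hy).ball x hFy w hw with hmem | heq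
            · exact Finset.mem_of_mem_erase ((hTF y hy).2.2.2.2 hmem)
            · rw [heq]; exact (hTF y hy).2.2.2.1
        · -- cov
          intro w hw
          by_cases hnear : T.dist w ws ≤ h
          · exact ⟨ws, by rw [hfws]; omega, by rw [hfws]; exact hnear⟩
          · push_neg at hnear
            set m : ℕ := T.dist w ws with hmdef
            obtain ⟨y, hy1, hy2⟩ := tree_intermediate T hT w ws (m - (h+1)) (by omega)
            have hy2' : T.dist y ws = h + 1 := by omega
            have hyB : y ∈ Br T P C := by
              by_contra hynot
              have hout := ball_out_Br T hT hpq hwsmem hynot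
              have hPy : T.dist P y = 0 := by omega
              have : P = y := (hT.isConnected.dist_eq_zero_iff).mp hPy
              rw [← this] at hy1
              have hcut := br_cut T hT hpq hw (P_not_mem_Br T hT hpq)
              rw [SimpleGraph.dist_self] at hcut
              have htri : T.dist w ws ≤ T.dist w C + T.dist C ws := hT.isConnected.dist_triangle
              omega
            have hyY : y ∈ Y := by
              rw [hYdef, Finset.mem_filter]; exact ⟨hyB, hy2'⟩
            obtain ⟨Q', hq1', hq2'⟩ := tree_intermediate T hT y ws 1 (by omega)
            have hQeq : Q' = QQ y := by
              refine unique_toward T hT (SimpleGraph.dist_eq_one_iff_adj.mp hq1')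
                (hQ1 y hyY) (by omega) (hQ2 y hyY) hy2'
            have hwreg : w ∈ Br T (QQ y) y := by
              rw [mem_Br]
              have htri : T.dist w ws ≤ T.dist w (QQ y) + T.dist (QQ y) ws :=
                hT.isConnected.dist_triangle
              have := hQ2 y hyY
              omega
            obtain ⟨x, hx1, hx2⟩ := (hFF y hyY).cov w hwreg
            have hfx : f x = FF y x := hEv1 y hyY x ((hFF y hyY).supp x hx1)
            exact ⟨x, by rw [hfx]; exact hx1, by rw [hfx]; exact hx2⟩
        · -- cost1
          have hsum : ∑ x, f x = h + ∑ y ∈ Y, ∑ x, FF y x := by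
            rw [hfdef]
            simp only
            rw [Finset.sum_add_distrib]
            congr 1
            · rw [hbasedef]
              simp only
              rw [Finset.sum_ite_eq' univ ws (fun _ => h)]
              simp
            · exact Finset.sum_comm
          omega
        · -- costH
          have hsum : ∑ x, f x = h + ∑ y ∈ Y, ∑ x, FF y x := by
            rw [hfdef]
            simp only
            rw [Finset.sum_add_distrib]
            congr 1
            · rw [hbasedef]
              simp only
              rw [Finset.sum_ite_eq' univ ws (fun _ => h)]
              simp
            · exact Finset.sum_comm
          intro w hw
          have := hwsmax w hw
          omega
        · -- wit
          intro x hx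
          rcases hEv3 x hx with hb | ⟨y, hy, hxy, hFy⟩
          · obtain ⟨hxw, hbv⟩ := hbase_ne x hb
            have hfx : f x = h := by rw [hxw]; exact hfws
            refine ⟨C, C_mem_Br T hT hpq, ?_, ?_⟩
            · right
              rw [hfx, hxw]
              have : T.dist C ws = T.dist ws C := SimpleGraph.dist_comm ..
              omega
            · intro y' hy' hfy'
              rcases hEv3 y' hfy' with hby' | ⟨y2, hy2, hy2y', hFy2⟩
              · exact absurd ((hbase_ne y' hby').1 ▸ rfl : y' = ws) (by rw [hxw] at hy'; exact hy')
              · have hfyv : f y' = FF y2 y' := hEv1 y2 hy2 y' hy2y'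
                rw [hfyv]
                by_contra hcon
                push_neg at hcon
                rcases (hFF y2 hy2).ball y' hFy2 C hcon with hmem | heq
                · exact (hTF y2 hy2).2.2.1 hmem
                · -- C = QQ y2 : use ballS
                  have hyadjC : T.Adj C y2 := by
                    have := hQ1 y2 hy2
                    rw [← heq] at this
                    exact this.symm
                  have hy2P : y2 ≠ P := by
                    intro hcontra
                    have := (hYmem y2 hy2).1
                    rw [hcontra] at this
                    exact P_not_mem_Br T hT hpq this
                  have hcard2 : 1 < (Br T (QQ y2) y2).card := by
                    rw [← heq]; exact hnopend y2 hyadjC hy2P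
                  have := (hFF y2 hy2).ballS hcard2 y' hFy2 C hcon
                  exact (hTF y2 hy2).2.2.1 this
          · obtain ⟨w, hwreg, hwesc, hwother⟩ := (hFF y hy).wit x hFy
            have hfx : f x = FF y x := hEv1 y hy x hxy
            refine ⟨w, Finset.mem_of_mem_erase ((hTF y hy).2.2.2.2 hwreg), ?_, ?_⟩
            · rw [hfx]; exact hwesc
            · intro y' hy' hfy'
              rcases hEv3 y' hfy' with hby' | ⟨y2, hy2, hy2y', hFy2⟩
              · obtain ⟨hy'w, hbv⟩ := hbase_ne y' hby'
                have hfy1 : f y' = h := by rw [hy'w]; exact hfws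
                have := (hTF y hy).1 w hwreg
                rw [hfy1, hy'w]
                omega
              · have hfyv : f y' = FF y2 y' := hEv1 y2 hy2 y' hy2y'
                by_cases hyy : y2 = y
                · rw [hyy] at hFy2 hfyv
                  rw [hfyv]
                  exact hwother y' hy' hFy2
                · rw [hfyv]
                  by_contra hcon
                  push_neg at hcon
                  rcases (hFF y2 hy2).ball y' hFy2 w hcon with hmem | heq
                  · exact hregdisj y hy y2 hy2 (fun hq => hyy hq.symm) w hwreg hmem
                  · have hfar := (hTF y hy).1 w hwreg
                    have hQws := hQ2 y2 hy2
                    rw [← heq] at hQws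
                    omega

end Main

/-- First step of a path towards the far end. -/
lemma step_toward {V : Type*} [DecidableEq V] (T : SimpleGraph V) (hT : T.IsTree)
    {v b : V} (q : T.Walk v b) (hq : q.IsPath) (hlen : 1 ≤ q.length) :
    ∃ y, T.Adj v y ∧ y ∈ q.support ∧ T.dist y b + 1 = T.dist v b := by
  cases q with
  | nil => simp at hlen
  | @cons _ c _ hadj q' =>
    refine ⟨c, hadj, ?_, ?_⟩
    · rw [Walk.support_cons]; exact List.mem_cons_of_mem _ q'.start_mem_support
    · have hq' : q'.IsPath := ((Walk.cons_isPath_iff hadj q').mp hq).1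
      have l1 : q'.length = T.dist c b := tree_path_length T hT q' hq'
      have l2 : (Walk.cons hadj q').length = T.dist v b := tree_path_length T hT _ hq
      rw [Walk.length_cons] at l2
      omega


/-- If a vertex `v` on a diametral path `D` of a tree `T` has at least three distinct
neighbors off `D`, then `Γ_b(T) > diam(T)`. -/
theorem tree_three_protrusions_not_diametrical {V : Type*} [Fintype V] (T : SimpleGraph V)
    (hT : T.IsTree) {a b : V} (p : T.Walk a b) (hp : p.IsPath)
    (hlen : p.length = gDiam T)
    (v u1 u2 u3 : V) (hv : v ∈ p.support)
    (h1 : T.Adj v u1) (h2 : T.Adj v u2) (h3 : T.Adj v u3)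
    (h12 : u1 ≠ u2) (h13 : u1 ≠ u3) (h23 : u2 ≠ u3)
    (hu1 : u1 ∉ p.support) (hu2 : u2 ∉ p.support) (hu3 : u3 ∉ p.support) :
    gDiam T < upperBroadcast T := by
  classical
  set d : ℕ := gDiam T with hd
  have hdab : T.dist a b = d := by
    rw [← tree_path_length T hT p hp, hlen]
  have hsplit : T.dist a v + T.dist v b = d := by
    have h4 := congrArg Walk.length (p.take_spec hv)
    rw [Walk.length_append] at h4
    have l1 : (p.takeUntil v hv).length = T.dist a v := tree_path_length T hT _ (hp.takeUntil hv)
    have l2 : (p.dropUntil v hv).length = T.dist v b := tree_path_length T hT _ (hp.dropUntil hv)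
    omega
  set d1 : ℕ := T.dist a v with hd1
  set d2 : ℕ := T.dist v b with hd2
  have hecc_le : ∀ x y : V, T.dist x y ≤ d := by
    intro x y
    have h1' : T.dist x y ≤ _root_.eccent T x := Finset.le_sup (Finset.mem_univ y)
    have h2' : _root_.eccent T x ≤ d := Finset.le_sup (Finset.mem_univ x)
    omega
  -- ends are not in the off-path branches
  have hoffb : ∀ u, T.Adj v u → u ∉ p.support → b ∉ Br T v u := by
    intro u hadj hup hmem
    rw [mem_Br] at hmem
    have hvb0 : T.dist v b ≠ 0 := by
      intro h0
      have : v = b := (hT.isConnected.dist_eq_zero_iff).mp h0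
      rw [this, SimpleGraph.dist_self] at hmem
      omega
    obtain ⟨y, hy1, hy2, hy3⟩ := step_toward T hT (p.dropUntil v hv) (hp.dropUntil hv)
      (by
        have l2 : (p.dropUntil v hv).length = T.dist v b :=
          tree_path_length T hT _ (hp.dropUntil hv)
        omega)
    have hysup : y ∈ p.support := (Walk.support_dropUntil_subset p hv) hy2
    have hcm1 : T.dist b u = T.dist u b := SimpleGraph.dist_comm ..
    have hcm2 : T.dist b v = T.dist v b := SimpleGraph.dist_comm ..
    have hbu : T.dist u b + 1 = T.dist v b := by
      rcases tree_dist_adj T hT hadj b with h | h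
      · omega
      · omega
    have huy : u = y := unique_toward T hT (z := b) hadj hy1 rfl (by omega) (by omega)
    exact hup (huy ▸ hysup)
  have hoffa : ∀ u, T.Adj v u → u ∉ p.support → a ∉ Br T v u := by
    intro u hadj hup hmem
    rw [mem_Br] at hmem
    have hva0 : T.dist v a ≠ 0 := by
      intro h0
      have : v = a := (hT.isConnected.dist_eq_zero_iff).mp h0
      rw [this, SimpleGraph.dist_self] at hmem
      omega
    obtain ⟨y, hy1, hy2, hy3⟩ := step_toward T hT (p.takeUntil v hv).reverse
      ((hp.takeUntil hv).reverse)
      (by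
        have l2 : (p.takeUntil v hv).reverse.length = T.dist v a :=
          tree_path_length T hT _ ((hp.takeUntil hv).reverse)
        omega)
    have hysup : y ∈ p.support := by
      have : y ∈ (p.takeUntil v hv).support := by
        have := hy2
        rw [Walk.support_reverse] at this
        exact List.mem_reverse.mp this
      exact (Walk.support_takeUntil_subset p hv) this
    have hcm1 : T.dist a u = T.dist u a := SimpleGraph.dist_comm ..
    have hcm2 : T.dist a v = T.dist v a := SimpleGraph.dist_comm ..
    have hbu : T.dist u a + 1 = T.dist v a := by
      rcases tree_dist_adj T hT hadj a with h | h
      · omega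
      · omega
    have huy : u = y := unique_toward T hT (z := a) hadj hy1 rfl (by omega) (by omega)
    exact hup (huy ▸ hysup)
  -- distances from protrusions to the ends
  have hprot : ∀ u, T.Adj v u → u ∉ p.support →
      T.dist u b = 1 + d2 ∧ T.dist u a = 1 + d1 := by
    intro u hadj hup
    have huB : u ∈ Br T v u := C_mem_Br T hT hadj
    have hc1 := br_cut T hT hadj huB (hoffb u hadj hup)
    have hc2 := br_cut T hT hadj huB (hoffa u hadj hup)
    rw [SimpleGraph.dist_self] at hc1 hc2
    have hcm1 : T.dist v a = T.dist a v := SimpleGraph.dist_comm ..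
    omega
  have hd1pos : 1 ≤ d1 := by
    have := (hprot u1 h1 hu1).1
    have := hecc_le u1 b
    omega
  have hd2pos : 1 ≤ d2 := by
    have := (hprot u1 h1 hu1).2
    have := hecc_le u1 a
    omega
  -- path-side neighbours of v
  have hstepa : ∃ y, T.Adj v y ∧ y ∈ p.support ∧ T.dist y a + 1 = T.dist v a := by
    obtain ⟨y, hy1, hy2, hy3⟩ := step_toward T hT (p.takeUntil v hv).reverse
      ((hp.takeUntil hv).reverse)
      (by
        have l2 : (p.takeUntil v hv).reverse.length = T.dist v a :=
          tree_path_length T hT _ ((hp.takeUntil hv).reverse)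
        have hcm : T.dist v a = T.dist a v := SimpleGraph.dist_comm ..
        omega)
    refine ⟨y, hy1, ?_, hy3⟩
    have : y ∈ (p.takeUntil v hv).support := by
      have := hy2
      rw [Walk.support_reverse] at this
      exact List.mem_reverse.mp this
    exact (Walk.support_takeUntil_subset p hv) this
  have hstepb : ∃ y, T.Adj v y ∧ y ∈ p.support ∧ T.dist y b + 1 = T.dist v b := by
    obtain ⟨y, hy1, hy2, hy3⟩ := step_toward T hT (p.dropUntil v hv) (hp.dropUntil hv)
      (by
        have l2 : (p.dropUntil v hv).length = T.dist v b :=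
          tree_path_length T hT _ (hp.dropUntil hv)
        omega)
    exact ⟨y, hy1, (Walk.support_dropUntil_subset p hv) hy2, hy3⟩
  obtain ⟨ya, hya1, hya2, hya3⟩ := hstepa
  obtain ⟨yb, hyb1, hyb2, hyb3⟩ := hstepb
  have hamem : a ∈ Br T v ya := by
    rw [mem_Br]
    have hcm1 : T.dist a ya = T.dist ya a := SimpleGraph.dist_comm ..
    have hcm2 : T.dist a v = T.dist v a := SimpleGraph.dist_comm ..
    omega
  have hbmem : b ∈ Br T v yb := by
    rw [mem_Br]
    have hcm1 : T.dist b yb = T.dist yb b := SimpleGraph.dist_comm ..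
    have hcm2 : T.dist b v = T.dist v b := SimpleGraph.dist_comm ..
    omega
  have hyayb : ya ≠ yb := by
    intro hcontra
    rw [hcontra] at hya3
    have htri : T.dist a b ≤ T.dist a yb + T.dist yb b := hT.isConnected.dist_triangle
    have hcm1 : T.dist a yb = T.dist yb a := SimpleGraph.dist_comm ..
    have hcm2 : T.dist a v = T.dist v a := SimpleGraph.dist_comm ..
    omega
  -- branch pieces for the neighbours of v other than u1
  set Ibr : Finset V := (univ.filter (fun n => T.Adj v n)).erase u1 with hIbrdef
  have hIbrmem : ∀ n, n ∈ Ibr ↔ (T.Adj v n ∧ n ≠ u1) := by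
    intro n
    rw [hIbrdef, Finset.mem_erase, Finset.mem_filter]
    constructor
    · rintro ⟨hne, -, hadj⟩; exact ⟨hadj, hne⟩
    · rintro ⟨hadj, hne⟩; exact ⟨hne, Finset.mem_univ n, hadj⟩
  have hGex : ∀ n ∈ Ibr, ∃ f, BrP T v n f := by
    intro n hn
    exact br_exists T hT (Fintype.card V) v n ((hIbrmem n).mp hn).1 (Finset.card_le_univ _)
  choose! G hG using hGex
  -- the E-pieces inside the u1-branch
  have hu1B : u1 ∈ Br T v u1 := C_mem_Br T hT h1
  have hCz : T.dist u1 u1 ≤ 1 := by rw [SimpleGraph.dist_self]; omega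
  set YE : Finset V := (Br T v u1).filter (fun y => T.dist y u1 = 2) with hYEdef
  have hYEmem : ∀ y ∈ YE, y ∈ Br T v u1 ∧ T.dist y u1 = 2 := by
    intro y hy; rw [hYEdef, Finset.mem_filter] at hy; exact hy
  have hQex : ∀ y ∈ YE, ∃ Q, T.Adj y Q ∧ T.dist Q u1 = 1 := by
    intro y hy
    obtain ⟨-, hyd⟩ := hYEmem y hy
    obtain ⟨Q, hq1, hq2⟩ := tree_intermediate T hT y u1 1 (by omega)
    exact ⟨Q, SimpleGraph.dist_eq_one_iff_adj.mp hq1, by omega⟩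
  choose! QQ hQ1 hQ2 using hQex
  have hTF : ∀ y ∈ YE,
      (∀ w ∈ Br T (QQ y) y, T.dist w u1 = T.dist w y + 1 + 1) ∧
      T.dist y u1 = T.dist (QQ y) u1 + 1 ∧
      u1 ∉ Br T (QQ y) y ∧
      QQ y ∈ Br T v u1 ∧
      Br T (QQ y) y ⊆ (Br T v u1).erase u1 := by
    intro y hy
    obtain ⟨hyB, hyd⟩ := hYEmem y hy
    exact toward_facts T hT h1 hu1B hCz hyB (by omega) (hQ1 y hy) (hQ2 y hy)
  have hFEex : ∀ y ∈ YE, ∃ f, BrP T (QQ y) y f := by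
    intro y hy
    exact br_exists T hT (Fintype.card V) (QQ y) y (hQ1 y hy).symm (Finset.card_le_univ _)
  choose! FE hFE using hFEex
  -- the assembled broadcast
  have hIbrYE : ∀ i, i ∈ Ibr → i ∉ YE := by
    intro i hi hiY
    obtain ⟨hiB, hid⟩ := hYEmem i hiY
    have := br_dist T hT h1 hiB
    have hvi : T.dist i v = 1 := by
      rw [SimpleGraph.dist_eq_one_iff_adj]; exact ((hIbrmem i).mp hi).1.symm
    omega
  set II : Finset V := Ibr ∪ YE with hIIdef
  set FFF : V → V → ℕ := fun i => if i ∈ YE then FE i else G i with hFFFdef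
  set RR : V → Finset V := fun i => if i ∈ YE then Br T (QQ i) i else Br T v i with hRRdef
  set base : V → ℕ := fun x => if x = u1 then 1 else 0 with hbasedef
  set F : V → ℕ := fun x => base x + ∑ i ∈ II, FFF i x with hFdef
  have hIImem : ∀ i ∈ II, (i ∈ YE ∧ FFF i = FE i ∧ RR i = Br T (QQ i) i) ∨
      (i ∈ Ibr ∧ i ∉ YE ∧ FFF i = G i ∧ RR i = Br T v i) := by
    intro i hi
    by_cases hiY : i ∈ YE
    · exact Or.inl ⟨hiY, by simp [hFFFdef, hiY], by simp [hRRdef, hiY]⟩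
    · right
      rw [hIIdef, Finset.mem_union] at hi
      rcases hi with h | h
      · exact ⟨h, hiY, by simp [hFFFdef, hiY], by simp [hRRdef, hiY]⟩
      · exact absurd h hiY
  -- supp of pieces
  have hsuppi : ∀ i ∈ II, ∀ x, FFF i x ≠ 0 → x ∈ RR i := by
    intro i hi x hx
    rcases hIImem i hi with ⟨hiY, hF, hR⟩ | ⟨hiI, -, hF, hR⟩
    · rw [hF] at hx; rw [hR]; exact (hFE i hiY).supp x hx
    · rw [hF] at hx; rw [hR]; exact (hG i hiI).supp x hx
  -- regions sit inside branches of v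
  have hRsub : ∀ i ∈ II, ∃ nb, T.Adj v nb ∧ RR i ⊆ Br T v nb ∧
      (∀ x, FFF i x ≠ 0 → ∀ w, T.dist w x ≤ FFF i x → w ∈ Br T v nb ∨ w = v) := by
    intro i hi
    rcases hIImem i hi with ⟨hiY, hF, hR⟩ | ⟨hiI, -, hF, hR⟩
    · refine ⟨u1, h1, ?_, ?_⟩
      · rw [hR]
        intro x hx
        exact Finset.mem_of_mem_erase ((hTF i hiY).2.2.2.2 hx)
      · intro x hx w hw
        rw [hF] at hx hw
        rcases (hFE i hiY).ball x hx w hw with hmem | heq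
        · exact Or.inl (Finset.mem_of_mem_erase ((hTF i hiY).2.2.2.2 hmem))
        · exact Or.inl (by rw [heq]; exact (hTF i hiY).2.2.2.1)
    · refine ⟨i, ((hIbrmem i).mp hiI).1, by rw [hR], ?_⟩
      intro x hx w hw
      rw [hF] at hx hw
      exact (hG i hiI).ball x hx w hw
  -- pairwise disjoint regions
  have hRdisj : ∀ i ∈ II, ∀ i' ∈ II, i ≠ i' → ∀ x, x ∈ RR i → x ∉ RR i' := by
    intro i hi i' hi' hne x hx hx'
    rcases hIImem i hi with ⟨hiY, hFi, hRi⟩ | ⟨hiI, hiYn, hFi, hRi⟩ <;>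
      rcases hIImem i' hi' with ⟨hiY', hFi', hRi'⟩ | ⟨hiI', hiYn', hFi', hRi'⟩
    · -- both YE
      rw [hRi] at hx; rw [hRi'] at hx'
      have f1 := (hTF i hiY).1 x hx
      have f1' := (hTF i' hiY').1 x hx'
      have hy'notin : i' ∉ Br T (QQ i) i := by
        intro hmem
        have := (hTF i hiY).1 i' hmem
        obtain ⟨-, hyd'⟩ := hYEmem i' hiY'
        have h0 : T.dist i' i = 0 := by omega
        exact hne (((hT.isConnected.dist_eq_zero_iff).mp h0).symm)
      have hcut := br_cut T hT (hQ1 i hiY).symm hx hy'notin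
      omega
    · -- i in YE, i' branch piece
      rw [hRi] at hx; rw [hRi'] at hx'
      have hxu1 : x ∈ Br T v u1 := Finset.mem_of_mem_erase ((hTF i hiY).2.2.2.2 hx)
      have hne' : i' ≠ u1 := ((hIbrmem i').mp hiI').2
      exact children_disjoint_Br T hT ((hIbrmem i').mp hiI').1 h1 hne' x hx' hxu1
    · -- i branch piece, i' in YE
      rw [hRi] at hx; rw [hRi'] at hx'
      have hxu1 : x ∈ Br T v u1 := Finset.mem_of_mem_erase ((hTF i' hiY').2.2.2.2 hx')
      have hne' : i ≠ u1 := ((hIbrmem i).mp hiI).2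
      exact children_disjoint_Br T hT ((hIbrmem i).mp hiI).1 h1 hne' x hx hxu1
    · -- both branch pieces
      rw [hRi] at hx; rw [hRi'] at hx'
      exact children_disjoint_Br T hT ((hIbrmem i).mp hiI).1 ((hIbrmem i').mp hiI').1 hne x hx hx'
  have hbase_ne : ∀ x, base x ≠ 0 → x = u1 ∧ base x = 1 := by
    intro x hx
    by_cases hxu : x = u1
    · exact ⟨hxu, by simp [hbasedef, hxu]⟩
    · simp [hbasedef, hxu] at hx
  have hbase_not : ∀ i ∈ II, ∀ x, base x ≠ 0 → x ∉ RR i := by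
    intro i hi x hx hmem
    obtain ⟨hxu, -⟩ := hbase_ne x hx
    rw [hxu] at hmem
    rcases hIImem i hi with ⟨hiY, hF, hR⟩ | ⟨hiI, -, hF, hR⟩
    · rw [hR] at hmem
      have := (hTF i hiY).1 u1 hmem
      rw [SimpleGraph.dist_self] at this
      omega
    · rw [hR] at hmem
      exact children_disjoint_Br T hT ((hIbrmem i).mp hiI).1 h1 ((hIbrmem i).mp hiI).2
        u1 hmem hu1B
  have hPE := piece_eval II FFF RR base hsuppi hRdisj hbase_not
  obtain ⟨hEv1, hEv2, hEv3⟩ := hPE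
  have hFu1 : F u1 = 1 := by
    rw [hFdef]; simp only
    rw [hEv2 u1 (by simp [hbasedef])]
    simp [hbasedef]
  -- ball structure of the assembled broadcast
  have hBall : ∀ x, F x ≠ 0 → ∃ nb, T.Adj v nb ∧
      ∀ w, T.dist w x ≤ F x → w ∈ Br T v nb ∨ w = v := by
    intro x hx
    rcases hEv3 x hx with hb | ⟨i, hi, hxi, hFi⟩
    · obtain ⟨hxu, hbv⟩ := hbase_ne x hb
      refine ⟨u1, h1, ?_⟩
      intro w hw
      rw [hxu, hFu1] at hw
      by_cases hwu : w = u1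
      · exact Or.inl (by rw [hwu]; exact hu1B)
      · have hdw : T.dist w u1 = 1 := by
          have := hT.isConnected.pos_dist_of_ne hwu
          omega
        have hadj : T.Adj u1 w := (SimpleGraph.dist_eq_one_iff_adj.mp hdw).symm
        by_cases hwv : w = v
        · exact Or.inr hwv
        · exact Or.inl (child_mem_Br T hT h1 hadj hwv)
    · obtain ⟨nb, hnb1, hnb2, hnb3⟩ := hRsub i hi
      have hfx : F x = FFF i x := hEv1 i hi x hxi
      refine ⟨nb, hnb1, ?_⟩
      intro w hw
      rw [hfx] at hw
      exact hnb3 x hFi w hw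
  -- broadcast bound
  have hBroadcast : IsBroadcast T F := by
    intro x
    by_cases hx : F x = 0
    · rw [hx]; exact Nat.zero_le _
    · obtain ⟨nb, hnb1, hnb2⟩ := hBall x hx
      -- pick uj ∈ {u2, u3} with uj ≠ nb
      obtain ⟨uj, hadjj, hjnb⟩ : ∃ uj, T.Adj v uj ∧ uj ≠ nb := by
        by_cases h2nb : u2 = nb
        · exact ⟨u3, h3, fun hq => h23 (h2nb.trans hq.symm)⟩
        · exact ⟨u2, h2, h2nb⟩
      have hujB : uj ∈ Br T v uj := C_mem_Br T hT hadjj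
      have hujnot : uj ∉ Br T v nb := children_disjoint_Br T hT hadjj hnb1 hjnb uj hujB
      have hujv : uj ≠ v := fun hq => T.loopless.irrefl v (hq ▸ hadjj)
      have hgt : ¬ (T.dist uj x ≤ F x) := by
        intro hle
        rcases hnb2 uj hle with hmem | heq
        · exact hujnot hmem
        · exact hujv heq
      have hecc : T.dist x uj ≤ _root_.eccent T x := Finset.le_sup (Finset.mem_univ uj)
      have hcm : T.dist x uj = T.dist uj x := SimpleGraph.dist_comm ..
      omega
  -- domination
  have hDom : BroadcastDominates T F := by
    intro w
    by_cases hwv : w = v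
    · refine ⟨u1, by omega, ?_⟩
      rw [hFu1, hwv]
      have : T.dist v u1 = 1 := by rw [SimpleGraph.dist_eq_one_iff_adj]; exact h1
      omega
    · -- find the branch containing w
      have hdwv : 1 ≤ T.dist w v := hT.isConnected.pos_dist_of_ne hwv
      obtain ⟨y, hy1, hy2⟩ := tree_intermediate T hT w v (T.dist w v - 1) (by omega)
      have hy2' : T.dist y v = 1 := by omega
      have hadjy : T.Adj v y := by
        rw [← SimpleGraph.dist_eq_one_iff_adj, SimpleGraph.dist_comm]; exact hy2'
      have hwy : w ∈ Br T v y := by rw [mem_Br]; omega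
      by_cases hyu1 : y = u1
      · rw [hyu1] at hwy
        by_cases hnear : T.dist w u1 ≤ 1
        · exact ⟨u1, by omega, by rw [hFu1]; exact hnear⟩
        · push_neg at hnear
          set m : ℕ := T.dist w u1 with hmdef
          obtain ⟨y2, hy21, hy22⟩ := tree_intermediate T hT w u1 (m - 2) (by omega)
          have hy22' : T.dist y2 u1 = 2 := by omega
          have hy2B : y2 ∈ Br T v u1 := by
            by_contra hynot
            have hcut := br_cut T hT h1 hwy hynot
            omega
          have hy2Y : y2 ∈ YE := by
            rw [hYEdef, Finset.mem_filter]; exact ⟨hy2B, hy22'⟩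
          obtain ⟨Q', hq1', hq2'⟩ := tree_intermediate T hT y2 u1 1 (by omega)
          have hQeq : Q' = QQ y2 :=
            unique_toward T hT (SimpleGraph.dist_eq_one_iff_adj.mp hq1')
              (hQ1 y2 hy2Y) (by omega) (hQ2 y2 hy2Y) (by omega)
          have hwreg : w ∈ Br T (QQ y2) y2 := by
            rw [mem_Br]
            have htri : T.dist w u1 ≤ T.dist w (QQ y2) + T.dist (QQ y2) u1 :=
              hT.isConnected.dist_triangle
            have := hQ2 y2 hy2Y
            omega
          obtain ⟨x, hx1, hx2⟩ := (hFE y2 hy2Y).cov w hwreg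
          have hy2II : y2 ∈ II := by rw [hIIdef, Finset.mem_union]; exact Or.inr hy2Y
          have hfx : F x = FE y2 x := by
            have := hEv1 y2 hy2II x (by
              rw [hRRdef]; simp only [hy2Y, if_true]
              exact (hFE y2 hy2Y).supp x hx1)
            rw [hFdef]
            simp only
            rw [this]
            simp [hFFFdef, hy2Y]
          exact ⟨x, by rw [hfx]; omega, by rw [hfx]; exact hx2⟩
      · have hyIbr : y ∈ Ibr := (hIbrmem y).mpr ⟨hadjy, hyu1⟩
        have hyII : y ∈ II := by rw [hIIdef, Finset.mem_union]; exact Or.inl hyIbr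
        obtain ⟨x, hx1, hx2⟩ := (hG y hyIbr).cov w hwy
        have hfx : F x = G y x := by
          have hyYn : y ∉ YE := hIbrYE y hyIbr
          have := hEv1 y hyII x (by
            rw [hRRdef]; simp only [hyYn, if_false]
            exact (hG y hyIbr).supp x hx1)
          rw [hFdef]
          simp only
          rw [this]
          simp [hFFFdef, hyYn]
        exact ⟨x, by rw [hfx]; omega, by rw [hfx]; exact hx2⟩
  -- witnesses
  have hWit : ∀ x, F x ≠ 0 → ∃ w, (F x = 1 ∨ F x ≤ T.dist w x) ∧
      ∀ y, y ≠ x → F y ≠ 0 → F y < T.dist w y := by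
    intro x hx
    rcases hEv3 x hx with hb | ⟨i, hi, hxi, hFi⟩
    · -- x = u1
      obtain ⟨hxu, -⟩ := hbase_ne x hb
      refine ⟨u1, Or.inl (by rw [hxu]; exact hFu1), ?_⟩
      intro y hy hfy
      rcases hEv3 y hfy with hby | ⟨i, hi, hyi, hFiy⟩
      · exact absurd ((hbase_ne y hby).1.trans hxu.symm) hy
      · have hfyv : F y = FFF i y := hEv1 i hi y hyi
        rw [hfyv]
        by_contra hcon
        push_neg at hcon
        rcases hIImem i hi with ⟨hiY, hF', hR'⟩ | ⟨hiI, hiYn, hF', hR'⟩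
        · rw [hF'] at hcon hFiy
          rcases (hFE i hiY).ball y hFiy u1 hcon with hmem | heq
          · have := (hTF i hiY).1 u1 hmem
            rw [SimpleGraph.dist_self] at this
            omega
          · have := hQ2 i hiY
            rw [← heq] at this
            rw [SimpleGraph.dist_self] at this
            omega
        · rw [hF'] at hcon hFiy
          rcases (hG i hiI).ball y hFiy u1 hcon with hmem | heq
          · exact children_disjoint_Br T hT ((hIbrmem i).mp hiI).1 h1
              ((hIbrmem i).mp hiI).2 u1 hmem hu1B
          · exact T.loopless.irrefl v (heq ▸ h1)
    · -- x in a piece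
      rcases hIImem i hi with ⟨hiY, hF', hR'⟩ | ⟨hiI, hiYn, hF', hR'⟩
      · -- E-piece
        rw [hF'] at hFi
        obtain ⟨w, hwreg, hwesc, hwother⟩ := (hFE i hiY).wit x hFi
        have hfx : F x = FE i x := by
          have := hEv1 i hi x hxi
          rw [hFdef]
          simp only
          rw [this, hF']
        have hwu1d : T.dist w u1 = T.dist w i + 2 := by
          have := (hTF i hiY).1 w hwreg
          omega
        refine ⟨w, ?_, ?_⟩
        · rw [hfx]; exact hwesc
        · intro y hy hfy
          rcases hEv3 y hfy with hby | ⟨i2, hi2, hyi2, hFiy2⟩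
          · obtain ⟨hyu, -⟩ := hbase_ne y hby
            have hfy1 : F y = 1 := by rw [hyu]; exact hFu1
            rw [hfy1, hyu]
            have hcm : T.dist u1 w = T.dist w u1 := SimpleGraph.dist_comm ..
            omega
          · have hfyv : F y = FFF i2 y := hEv1 i2 hi2 y hyi2
            by_cases hii : i2 = i
            · rw [hii] at hfyv
              rw [hfyv, hF']
              have hFy : FE i y ≠ 0 := by rw [hii, hF'] at hFiy2; exact hFiy2
              exact hwother y hy hFy
            · rw [hfyv]
              by_contra hcon
              push_neg at hcon
              rcases hIImem i2 hi2 with ⟨hi2Y, hF2, hR2⟩ | ⟨hi2I, hi2Yn, hF2, hR2⟩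
              · rw [hF2] at hcon hFiy2
                rcases (hFE i2 hi2Y).ball y hFiy2 w hcon with hmem | heq
                · have hwin : w ∈ RR i := by rw [hR']; exact hwreg
                  have hwin2 : w ∈ RR i2 := by rw [hR2]; exact hmem
                  exact hRdisj i hi i2 hi2 (fun hq => hii hq.symm) w hwin hwin2
                · have := hQ2 i2 hi2Y
                  rw [← heq] at this
                  omega
              · rw [hF2] at hcon hFiy2
                rcases (hG i2 hi2I).ball y hFiy2 w hcon with hmem | heq
                · have hwu1mem : w ∈ Br T v u1 :=
                    Finset.mem_of_mem_erase ((hTF i hiY).2.2.2.2 hwreg)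
                  exact children_disjoint_Br T hT ((hIbrmem i2).mp hi2I).1 h1
                    ((hIbrmem i2).mp hi2I).2 w hmem hwu1mem
                · -- w = v impossible since w ∈ Br T v u1
                  have hwu1mem : w ∈ Br T v u1 :=
                    Finset.mem_of_mem_erase ((hTF i hiY).2.2.2.2 hwreg)
                  rw [heq] at hwu1mem
                  exact P_not_mem_Br T hT h1 hwu1mem
      · -- branch piece
        rw [hF'] at hFi
        obtain ⟨w, hwreg, hwesc, hwother⟩ := (hG i hiI).wit x hFi
        have hfx : F x = G i x := by
          have := hEv1 i hi x hxi
          rw [hFdef]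
          simp only
          rw [this, hF']
        have hwu1d : T.dist w u1 = T.dist w i + 2 := by
          have hu1notin : u1 ∉ Br T v i :=
            children_disjoint_Br T hT h1 ((hIbrmem i).mp hiI).1
              (fun hq => ((hIbrmem i).mp hiI).2 hq.symm) u1 hu1B
          have hcut := br_cut T hT ((hIbrmem i).mp hiI).1 hwreg hu1notin
          have : T.dist v u1 = 1 := by rw [SimpleGraph.dist_eq_one_iff_adj]; exact h1
          omega
        refine ⟨w, ?_, ?_⟩
        · rw [hfx]; exact hwesc
        · intro y hy hfy
          rcases hEv3 y hfy with hby | ⟨i2, hi2, hyi2, hFiy2⟩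
          · obtain ⟨hyu, -⟩ := hbase_ne y hby
            have hfy1 : F y = 1 := by rw [hyu]; exact hFu1
            rw [hfy1, hyu]
            have hcm : T.dist u1 w = T.dist w u1 := SimpleGraph.dist_comm ..
            omega
          · have hfyv : F y = FFF i2 y := hEv1 i2 hi2 y hyi2
            by_cases hii : i2 = i
            · rw [hii] at hfyv
              rw [hfyv, hF']
              have hFy : G i y ≠ 0 := by rw [hii, hF'] at hFiy2; exact hFiy2
              exact hwother y hy hFy
            · rw [hfyv]
              by_contra hcon
              push_neg at hcon
              rcases hIImem i2 hi2 with ⟨hi2Y, hF2, hR2⟩ | ⟨hi2I, hi2Yn, hF2, hR2⟩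
              · rw [hF2] at hcon hFiy2
                rcases (hFE i2 hi2Y).ball y hFiy2 w hcon with hmem | heq
                · have hwu1mem : w ∈ Br T v u1 :=
                    Finset.mem_of_mem_erase ((hTF i2 hi2Y).2.2.2.2 hmem)
                  exact children_disjoint_Br T hT ((hIbrmem i).mp hiI).1 h1
                    ((hIbrmem i).mp hiI).2 w hwreg hwu1mem
                · -- w = QQ i2 ∈ Br T v u1, but w ∈ Br T v i
                  have : QQ i2 ∈ Br T v u1 := (hTF i2 hi2Y).2.2.2.1
                  rw [← heq] at this
                  exact children_disjoint_Br T hT ((hIbrmem i).mp hiI).1 h1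
                    ((hIbrmem i).mp hiI).2 w hwreg this
              · rw [hF2] at hcon hFiy2
                rcases (hG i2 hi2I).ball y hFiy2 w hcon with hmem | heq
                · have hwin : w ∈ RR i := by rw [hR']; exact hwreg
                  have hwin2 : w ∈ RR i2 := by rw [hR2]; exact hmem
                  exact hRdisj i hi i2 hi2 (fun hq => hii hq.symm) w hwin hwin2
                · rw [heq] at hwreg
                  exact P_not_mem_Br T hT ((hIbrmem i).mp hiI).1 hwreg
  -- cost bound
  have hsum : ∑ x, F x = 1 + ∑ i ∈ II, ∑ x, FFF i x := by
    rw [hFdef]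
    simp only
    rw [Finset.sum_add_distrib]
    congr 1
    · rw [hbasedef]
      simp only
      rw [Finset.sum_ite_eq' univ u1 (fun _ => 1)]
      simp
    · exact Finset.sum_comm
  have hyaIbr : ya ∈ Ibr := (hIbrmem ya).mpr ⟨hya1, fun hq => hu1 (hq ▸ hya2)⟩
  have hybIbr : yb ∈ Ibr := (hIbrmem yb).mpr ⟨hyb1, fun hq => hu1 (hq ▸ hyb2)⟩
  have hu2Ibr : u2 ∈ Ibr := (hIbrmem u2).mpr ⟨h2, fun hq => h12 hq.symm⟩
  have hu3Ibr : u3 ∈ Ibr := (hIbrmem u3).mpr ⟨h3, fun hq => h13 hq.symm⟩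
  have hyau2 : ya ≠ u2 := fun hq => hu2 (hq ▸ hya2)
  have hyau3 : ya ≠ u3 := fun hq => hu3 (hq ▸ hya2)
  have hybu2 : yb ≠ u2 := fun hq => hu2 (hq ▸ hyb2)
  have hybu3 : yb ≠ u3 := fun hq => hu3 (hq ▸ hyb2)
  have hcost_a : d1 - 1 ≤ ∑ x, FFF ya x := by
    have hyaYn : ya ∉ YE := hIbrYE ya hyaIbr
    have hco := (hG ya hyaIbr).costH a hamem
    have hcm1 : T.dist a ya = T.dist ya a := SimpleGraph.dist_comm ..
    have hcm2 : T.dist a v = T.dist v a := SimpleGraph.dist_comm ..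
    have hFq : FFF ya = G ya := by simp [hFFFdef, hyaYn]
    rw [hFq]
    omega
  have hcost_b : d2 - 1 ≤ ∑ x, FFF yb x := by
    have hybYn : yb ∉ YE := hIbrYE yb hybIbr
    have hco := (hG yb hybIbr).costH b hbmem
    have hcm1 : T.dist b yb = T.dist yb b := SimpleGraph.dist_comm ..
    have hcm2 : T.dist b v = T.dist v b := SimpleGraph.dist_comm ..
    have hFq : FFF yb = G yb := by simp [hFFFdef, hybYn]
    rw [hFq]
    omega
  have hcost_u2 : 1 ≤ ∑ x, FFF u2 x := by
    have hYn : u2 ∉ YE := hIbrYE u2 hu2Ibr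
    have hFq : FFF u2 = G u2 := by simp [hFFFdef, hYn]
    rw [hFq]
    exact (hG u2 hu2Ibr).cost1
  have hcost_u3 : 1 ≤ ∑ x, FFF u3 x := by
    have hYn : u3 ∉ YE := hIbrYE u3 hu3Ibr
    have hFq : FFF u3 = G u3 := by simp [hFFFdef, hYn]
    rw [hFq]
    exact (hG u3 hu3Ibr).cost1
  have hS4 : ({ya, yb, u2, u3} : Finset V) ⊆ II := by
    intro x hx
    rw [hIIdef, Finset.mem_union]
    left
    simp only [Finset.mem_insert, Finset.mem_singleton] at hx
    rcases hx with rfl | rfl | rfl | rfl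
    · exact hyaIbr
    · exact hybIbr
    · exact hu2Ibr
    · exact hu3Ibr
  have hS4sum : (d1 - 1) + ((d2 - 1) + (1 + 1)) ≤ ∑ i ∈ ({ya, yb, u2, u3} : Finset V), ∑ x, FFF i x := by
    rw [Finset.sum_insert (by simp [hyayb, hyau2, hyau3])]
    rw [Finset.sum_insert (by simp [hybu2, hybu3])]
    rw [Finset.sum_insert (by simp [h23])]
    rw [Finset.sum_singleton]
    gcongr
  have hsum_le : ∑ i ∈ ({ya, yb, u2, u3} : Finset V), ∑ x, FFF i x ≤ ∑ i ∈ II, ∑ x, FFF i x :=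
    Finset.sum_le_sum_of_subset hS4
  have hcostF : d + 1 ≤ ∑ x, F x := by
    rw [hsum]
    omega
  -- assemble minimal dominating broadcast
  have hMDB : MinimalDominatingBroadcast T F := by
    refine ⟨hBroadcast, hDom, ?_⟩
    intro g hgb hgle hgne hgdom
    have hex : ∃ x, g x < F x := by
      by_contra hcon
      push_neg at hcon
      exact hgne (funext fun x => le_antisymm (hgle x) (hcon x))
    obtain ⟨x, hxlt⟩ := hex
    have hFx : F x ≠ 0 := by omega
    obtain ⟨w, hesc, hother⟩ := hWit x hFx
    obtain ⟨ydom, hy1, hy2⟩ := hgdom w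
    by_cases hyx : ydom = x
    · rw [hyx] at hy1 hy2
      rcases hesc with h | h
      · omega
      · have := hgle x
        omega
    · have hgey : g ydom ≤ F ydom := hgle ydom
      have hFy : F ydom ≠ 0 := by
        intro h0
        rw [h0] at hgey
        omega
      have hlt := hother ydom hyx hFy
      exact absurd (lt_of_le_of_lt hgey hlt) (not_lt.mpr hy2)
  -- conclude
  have hmem : (∑ x, F x) ∈ {k : ℕ | ∃ f : V → ℕ, MinimalDominatingBroadcast T f ∧ cost f = k} :=
    ⟨F, hMDB, rfl⟩
  have hbdd : BddAbove {k : ℕ | ∃ f : V → ℕ, MinimalDominatingBroadcast T f ∧ cost f = k} := by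
    refine ⟨∑ x : V, _root_.eccent T x, ?_⟩
    rintro k ⟨f, hf, rfl⟩
    exact Finset.sum_le_sum (fun x _ => hf.1 x)
  have hle : (∑ x, F x) ≤ upperBroadcast T := le_csSup hbdd hmem
  omega
end

section
/- Let T be a finite tree with diam(T) = d ≥ 2 and let D = v_0, v_1, …, v_d be a diametral path of T. If the vertex v_1 (adjacent to the endpoint v_0 of D) has at least two distinct neighbors not lying on D (so v_1 has degree at least 4), then Γ_b(T) > diam(T); in particular T is not diametrical. -/
open SimpleGraph Finset

namespace TreeBC

variable {V : Type*} {T : SimpleGraph V}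

lemma path_len (hT : T.IsTree) {u v : V} (W : T.Walk u v) (hW : W.IsPath) :
    W.length = T.dist u v := by
  obtain ⟨P, hP, hl⟩ := hT.isConnected.exists_path_of_dist u v
  obtain ⟨p₀, _hp₀, huq⟩ := hT.existsUnique_path u v
  have : W = P := (huq W hW).trans (huq P hP).symm
  rw [this, hl]

lemma isPath_concat {u v w : V} {p : T.Walk u v} (hp : p.IsPath) (h : T.Adj v w)
    (hw : w ∉ p.support) : (p.concat h).IsPath := by
  have h2 : (p.concat h).reverse.IsPath := by
    rw [Walk.reverse_concat]
    exact (hp.reverse).cons (by simpa [Walk.support_reverse] using hw)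
  have := h2.reverse; rwa [Walk.reverse_reverse] at this

lemma no_tri (hT : T.IsTree) {a b c : V} (hab : T.Adj a b) (hbc : T.Adj b c) :
    ¬ T.Adj a c := by
  intro hac
  have hd1 : T.dist a c = 1 := SimpleGraph.dist_eq_one_iff_adj.mpr hac
  have hW : (Walk.cons hab (Walk.cons hbc Walk.nil)).IsPath := by
    simp [Walk.isPath_def]
    exact ⟨⟨hab.ne, hac.ne⟩, hbc.ne⟩
  have := path_len hT _ hW
  simp [hd1] at this

/-- F1 : distances to adjacent vertices differ by exactly 1. -/
lemma adj_dist_cases (hT : T.IsTree) {a b : V} (h : T.Adj a b) (q : V) :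
    T.dist q b = T.dist q a + 1 ∨ T.dist q a = T.dist q b + 1 := by
  classical
  obtain ⟨Q, hQ, hl⟩ := hT.isConnected.exists_path_of_dist q b
  by_cases ha : a ∈ Q.support
  · left
    have h1 := path_len hT _ (hQ.takeUntil ha)
    have h2 := path_len hT _ (hQ.dropUntil ha)
    have h3 : (Q.takeUntil a ha).length + (Q.dropUntil a ha).length = Q.length := by
      rw [← Walk.length_append, Walk.take_spec]
    have hab1 : T.dist a b = 1 := SimpleGraph.dist_eq_one_iff_adj.mpr h
    omega
  · right
    have := path_len hT _ (isPath_concat hQ h.symm ha)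
    rw [Walk.length_concat] at this
    omega

end TreeBC

namespace TreeBC2
open TreeBC

variable {V : Type*} {T : SimpleGraph V}

/-- The branch of `n` away from `c` (for adjacent `c n`), defined metrically. -/
def brd (T : SimpleGraph V) (c n q : V) : Prop := T.dist q n < T.dist q c

lemma dist_le_succ_of_adj (hT : T.IsTree) {a b : V} (h : T.Adj a b) (q : V) :
    T.dist q b ≤ T.dist q a + 1 := by
  have h1 : T.dist a b = 1 := SimpleGraph.dist_eq_one_iff_adj.mpr h
  calc T.dist q b ≤ T.dist q a + T.dist a b := hT.isConnected.dist_triangle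
    _ = T.dist q a + 1 := by rw [h1]

lemma brd_iff (hT : T.IsTree) {c n : V} (h : T.Adj c n) (q : V) :
    brd T c n q ↔ T.dist q c = T.dist q n + 1 := by
  unfold brd
  rcases adj_dist_cases hT h q with h1 | h1
  · constructor
    · intro h2; omega
    · intro h2; omega
  · have := dist_le_succ_of_adj hT h.symm q
    constructor
    · intro h2; omega
    · intro h2; omega

lemma not_brd_iff (hT : T.IsTree) {c n : V} (h : T.Adj c n) (q : V) :
    ¬ brd T c n q ↔ T.dist q n = T.dist q c + 1 := by
  unfold brd
  rcases adj_dist_cases hT h q with h1 | h1 <;> constructor <;> intro h2 <;> omega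

lemma brd_self (hT : T.IsTree) {c n : V} (h : T.Adj c n) : brd T c n n := by
  unfold brd
  have h1 : T.dist n c = 1 := SimpleGraph.dist_eq_one_iff_adj.mpr h.symm
  have h2 : T.dist n n = 0 := SimpleGraph.dist_self
  omega

lemma not_brd_base (hT : T.IsTree) {c n : V} (h : T.Adj c n) : ¬ brd T c n c := by
  unfold brd
  have h1 : T.dist c n = 1 := SimpleGraph.dist_eq_one_iff_adj.mpr h
  have h2 : T.dist c c = 0 := SimpleGraph.dist_self
  omega

lemma dist_add_of_mem_support (hT : T.IsTree) {u v z : V} {W : T.Walk u v} (hW : W.IsPath)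
    (hz : z ∈ W.support) : T.dist u z + T.dist z v = T.dist u v := by
  classical
  have h1 := path_len hT _ (hW.takeUntil hz)
  have h2 := path_len hT _ (hW.dropUntil hz)
  have h3 : (W.takeUntil z hz).length + (W.dropUntil z hz).length = W.length := by
    rw [← Walk.length_append, Walk.take_spec]
  have h4 := path_len hT _ hW
  omega

lemma between_brd (hT : T.IsTree) {c n q z : V} (h : T.Adj c n) (hq : brd T c n q)
    (hz : T.dist q z + T.dist z n = T.dist q n) : brd T c n z := by
  by_contra hzc
  rw [not_brd_iff hT h] at hzc
  have hq' : T.dist q n < T.dist q c := hq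
  have h2 : T.dist q c ≤ T.dist q z + T.dist z c := hT.isConnected.dist_triangle
  omega

lemma between_nbrd (hT : T.IsTree) {c n x z : V} (h : T.Adj c n) (hx : ¬ brd T c n x)
    (hz : T.dist c z + T.dist z x = T.dist c x) : ¬ brd T c n z := by
  intro hzb
  rw [brd_iff hT h] at hzb
  have hx' : T.dist x c ≤ T.dist x n := by
    unfold brd at hx; omega
  have h2 : T.dist x n ≤ T.dist x z + T.dist z n := hT.isConnected.dist_triangle
  have h3 : T.dist x z = T.dist z x := SimpleGraph.dist_comm
  have h4 : T.dist x c = T.dist c x := SimpleGraph.dist_comm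
  have h5 : T.dist z c = T.dist c z := SimpleGraph.dist_comm
  omega

/-- The key gluing lemma: distances across the edge `c - n` add up. -/
lemma glue (hT : T.IsTree) {c n : V} (h : T.Adj c n) {q x : V} (hq : brd T c n q)
    (hx : ¬ brd T c n x) : T.dist q x = T.dist q n + 1 + T.dist c x := by
  classical
  obtain ⟨P1, hP1, hl1⟩ := hT.isConnected.exists_path_of_dist q n
  obtain ⟨P2, hP2, hl2⟩ := hT.isConnected.exists_path_of_dist c x
  have hP1mem : ∀ z ∈ P1.support, brd T c n z := fun z hz =>
    between_brd hT h hq (dist_add_of_mem_support hT hP1 hz)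
  have hP2mem : ∀ z ∈ P2.support, ¬ brd T c n z := fun z hz =>
    between_nbrd hT h hx (dist_add_of_mem_support hT hP2 hz)
  have hW : (P1.append (Walk.cons h.symm P2)).IsPath := by
    rw [Walk.isPath_def, Walk.support_append, Walk.support_cons]
    simp only [List.tail_cons]
    rw [List.nodup_append]
    refine ⟨hP1.support_nodup, hP2.support_nodup, ?_⟩
    intro z hz1 w hw heq
    subst heq
    exact hP2mem z hw (hP1mem z hz1)
  have := path_len hT _ hW
  rw [Walk.length_append, Walk.length_cons, hl1, hl2] at this
  omega

end TreeBC2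

namespace TreeBC3
open TreeBC TreeBC2

variable {V : Type*} {T : SimpleGraph V}

lemma exists_adj_dist (hT : T.IsTree) {x y : V} {k : ℕ} (hk : T.dist x y = k + 1) :
    ∃ z, T.Adj x z ∧ T.dist z y = k := by
  have hne : T.dist x y ≠ 0 := by omega
  obtain ⟨P, hl⟩ := SimpleGraph.exists_walk_of_dist_ne_zero hne
  cases P with
  | nil => exact absurd SimpleGraph.dist_self hne
  | @cons _ z _ hadj rest =>
    refine ⟨z, hadj, ?_⟩
    have h1 : T.dist z y ≤ rest.length := SimpleGraph.dist_le rest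
    have h2 : rest.length = k := by
      have := Walk.length_cons hadj rest
      omega
    have h3 : T.dist x y ≤ T.dist x z + T.dist z y := hT.isConnected.dist_triangle
    have h4 : T.dist x z ≤ 1 := by
      have : T.dist x z = 1 := SimpleGraph.dist_eq_one_iff_adj.mpr hadj
      omega
    omega

lemma exists_interp (hT : T.IsTree) {x y : V} : ∀ k, k ≤ T.dist x y →
    ∃ z, T.dist x z = k ∧ T.dist z y = T.dist x y - k := by
  intro k
  induction k with
  | zero => intro _; exact ⟨x, SimpleGraph.dist_self, by omega⟩
  | succ k ih =>
    intro hk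
    obtain ⟨z, hz1, hz2⟩ := ih (by omega)
    have hz2' : T.dist z y = (T.dist x y - k - 1) + 1 := by omega
    obtain ⟨w, hw1, hw2⟩ := exists_adj_dist hT hz2'
    refine ⟨w, ?_, by omega⟩
    have h1 : T.dist x w ≤ T.dist x z + T.dist z w := hT.isConnected.dist_triangle
    have h2 : T.dist z w = 1 := SimpleGraph.dist_eq_one_iff_adj.mpr hw1
    have h3 : T.dist x y ≤ T.dist x w + T.dist w y := hT.isConnected.dist_triangle
    omega

/-- a leaf-child's branch is a singleton -/
lemma singleton_branch (hT : T.IsTree) {n z : V} (h : T.Adj n z)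
    (hleaf : ∀ y, T.Adj z y → y = n) : ∀ q, brd T n z q → q = z := by
  intro q hq
  by_contra hqz
  have h1 : T.dist q z = T.dist q n + 1 → False := by
    intro _
    have : T.dist q z < T.dist q n := hq
    omega
  rw [brd_iff hT h] at hq
  have hzq : T.dist z q ≠ 0 := by
    intro h0
    exact hqz ((hT.isConnected.dist_eq_zero_iff).mp (SimpleGraph.dist_comm.trans h0))
  have : T.dist z q = (T.dist z q - 1) + 1 := by omega
  obtain ⟨w, hw1, hw2⟩ := exists_adj_dist hT this
  have hwn : w = n := hleaf w hw1
  rw [hwn] at hw2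
  have e1 : T.dist n q = T.dist q n := SimpleGraph.dist_comm
  have e2 : T.dist z q = T.dist q z := SimpleGraph.dist_comm
  omega

end TreeBC3

namespace TreeBC4
open TreeBC TreeBC2 TreeBC3

variable {V : Type*} {T : SimpleGraph V}

lemma child_facts (hT : T.IsTree) {c n x : V} (hadj : T.Adj c n) (hx : T.Adj n x)
    (hxc : x ≠ c) : T.dist x n = 1 ∧ T.dist x c = 2 ∧ brd T c n x := by
  have h1 : T.dist x n = 1 := SimpleGraph.dist_eq_one_iff_adj.mpr hx.symm
  have hna : ¬ T.Adj c x := no_tri hT hadj hx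
  have h2 : T.dist x c ≤ 2 := by
    have := dist_le_succ_of_adj hT hadj.symm x
    have e : T.dist x n = 1 := h1
    omega
  have h3 : T.dist x c ≠ 1 := by
    intro hh
    exact hna (SimpleGraph.dist_eq_one_iff_adj.mp (SimpleGraph.dist_comm.trans hh))
  have h4 : T.dist x c ≠ 0 := by
    intro hh
    exact hxc ((hT.isConnected.dist_eq_zero_iff).mp hh)
  have h5 : T.dist x c = 2 := by omega
  exact ⟨h1, h5, by unfold brd; omega⟩

lemma n_not_brd_child (hT : T.IsTree) {n x : V} (hx : T.Adj n x) : ¬ brd T n x n := by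
  unfold brd
  have h1 : T.dist n x = 1 := SimpleGraph.dist_eq_one_iff_adj.mpr hx
  have h2 : T.dist n n = 0 := SimpleGraph.dist_self
  omega

lemma branchsub (hT : T.IsTree) {c n x : V} (hadj : T.Adj c n) (hx : T.Adj n x)
    (hxc : x ≠ c) {q : V} (hq : brd T n x q) :
    brd T c n q ∧ T.dist q n = T.dist q x + 1 ∧ T.dist q c = T.dist q x + 2 := by
  obtain ⟨e1, e2, _⟩ := child_facts hT hadj hx hxc
  have hnn : ¬ brd T n x n := n_not_brd_child hT hx
  have hcn : ¬ brd T n x c := by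
    unfold brd
    have d1 : T.dist c x = 2 := SimpleGraph.dist_comm.trans e2
    have d2 : T.dist c n = 1 := SimpleGraph.dist_eq_one_iff_adj.mpr hadj
    omega
  have g1 := glue hT hx hq hnn
  have g2 := glue hT hx hq hcn
  have d3 : T.dist n n = 0 := SimpleGraph.dist_self
  have d4 : T.dist n c = 1 := SimpleGraph.dist_eq_one_iff_adj.mpr hadj.symm
  refine ⟨?_, by omega, by omega⟩
  unfold brd
  omega

lemma children_sep (hT : T.IsTree) {n x x' : V} (hx : T.Adj n x) (hx' : T.Adj n x')
    (hxx : x ≠ x') {q : V} (hq : brd T n x q) :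
    (¬ brd T n x' q) ∧ T.dist q x' = T.dist q x + 2 := by
  have hna : ¬ T.Adj x x' := by
    intro hc
    exact no_tri hT hx hc hx'
  have hd : T.dist x' x = 2 := by
    have h2 : T.dist x' x ≤ 2 := by
      have t := dist_le_succ_of_adj hT hx x'
      have e : T.dist x' n = 1 := SimpleGraph.dist_eq_one_iff_adj.mpr hx'.symm
      omega
    have h3 : T.dist x' x ≠ 1 := fun hh =>
      hna (SimpleGraph.dist_eq_one_iff_adj.mp (SimpleGraph.dist_comm.trans hh))
    have h4 : T.dist x' x ≠ 0 := fun hh =>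
      hxx (((hT.isConnected.dist_eq_zero_iff).mp hh).symm)
    omega
  have hx'nb : ¬ brd T n x x' := by
    unfold brd
    have e : T.dist x' n = 1 := SimpleGraph.dist_eq_one_iff_adj.mpr hx'.symm
    omega
  have g := glue hT hx hq hx'nb
  have e2 : T.dist n x' = 1 := SimpleGraph.dist_eq_one_iff_adj.mpr hx'
  constructor
  · unfold brd
    have hqn : T.dist q n = T.dist q x + 1 := by
      have hnn : ¬ brd T n x n := n_not_brd_child hT hx
      have g2 := glue hT hx hq hnn
      have d3 : T.dist n n = 0 := SimpleGraph.dist_self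
      omega
    omega
  · omega

/-- system of balls with private vertices for the branch `brd T c n` -/
def GoodS (T : SimpleGraph V) (c n : V) (sys : Finset (V × ℕ × V)) : Prop :=
  (∀ b ∈ sys, ∀ b' ∈ sys, (b : V × ℕ × V).1 = (b' : V × ℕ × V).1 → b = b') ∧
  (∀ b ∈ sys, brd T c n b.1 ∧ 1 ≤ b.2.1 ∧ b.2.1 ≤ T.dist n b.1) ∧
  (∀ q, brd T c n q → ∃ b ∈ sys, T.dist q b.1 ≤ b.2.1) ∧
  (∀ q, brd T c n q → T.dist n q ≤ ∑ b ∈ sys, b.2.1) ∧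
  (∀ b ∈ sys, brd T c n b.2.2 ∧
      (T.dist b.1 b.2.2 = b.2.1 ∨ (b.2.1 = 1 ∧ b.2.2 = b.1)) ∧
      ∀ b' ∈ sys, b' ≠ b → b'.2.1 < T.dist b'.1 b.2.2)

end TreeBC4
namespace TreeBC5
open TreeBC TreeBC2 TreeBC3 TreeBC4

variable {V : Type*} {T : SimpleGraph V}

lemma dist_children (hT : T.IsTree) {n x x' : V} (hx : T.Adj n x) (hx' : T.Adj n x')
    (hne : x ≠ x') : T.dist x x' = 2 := by
  have hna : ¬ T.Adj x x' := by
    intro hc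
    exact no_tri hT hx hc hx'
  have h2 : T.dist x x' ≤ 2 := by
    have t := dist_le_succ_of_adj hT hx' x
    have e : T.dist x n = 1 := SimpleGraph.dist_eq_one_iff_adj.mpr hx.symm
    omega
  have h3 : T.dist x x' ≠ 1 := fun hh => hna (SimpleGraph.dist_eq_one_iff_adj.mp hh)
  have h4 : T.dist x x' ≠ 0 := fun hh => hne ((hT.isConnected.dist_eq_zero_iff).mp hh)
  omega

lemma main_rec [Fintype V] (hT : T.IsTree) :
    ∀ (m : ℕ) (c n : V), T.Adj c n →
    (∀ q, brd T c n q → T.dist n q ≤ m) →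
    (∃ x, T.Adj n x ∧ x ≠ c) →
    ∃ sys : Finset (V × ℕ × V), GoodS T c n sys := by
  intro m
  induction m with
  | zero =>
    intro c n hadj hbound hex
    obtain ⟨x, hx, hxc⟩ := hex
    obtain ⟨_, _, hbx⟩ := child_facts hT hadj hx hxc
    have h1 := hbound x hbx
    have e : T.dist n x = 1 := SimpleGraph.dist_eq_one_iff_adj.mpr hx
    omega
  | succ m IH =>
    intro c n hadj hbound hex
    classical
    by_cases hlc0 : ∃ ℓ, (T.Adj n ℓ ∧ ℓ ≠ c) ∧ ∀ y, T.Adj ℓ y → y = n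
    · -- CASE A : `n` has a leaf child
      obtain ⟨ℓ₀, ⟨hℓ₀a, hℓ₀c⟩, hℓ₀leaf⟩ := hlc0
      set lc : Finset V :=
        univ.filter (fun ℓ => (T.Adj n ℓ ∧ ℓ ≠ c) ∧ ∀ y, T.Adj ℓ y → y = n) with hlcdef
      set nl : Finset V :=
        univ.filter (fun x => (T.Adj n x ∧ x ≠ c) ∧ ∃ y, T.Adj x y ∧ y ≠ n) with hnldef
      have lcI : ∀ ℓ, (T.Adj n ℓ ∧ ℓ ≠ c) → (∀ y, T.Adj ℓ y → y = n) → ℓ ∈ lc := by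
        intro ℓ h1 h2; simp [hlcdef]; exact ⟨⟨h1.1, h1.2⟩, h2⟩
      have lcP : ∀ ℓ ∈ lc, (T.Adj n ℓ ∧ ℓ ≠ c) ∧ ∀ y, T.Adj ℓ y → y = n := by
        intro ℓ h; simpa [hlcdef] using h
      have nlI : ∀ x, (T.Adj n x ∧ x ≠ c) → (∃ y, T.Adj x y ∧ y ≠ n) → x ∈ nl := by
        intro x h1 h2; simp [hnldef]; exact ⟨⟨h1.1, h1.2⟩, h2⟩
      have nlP : ∀ x ∈ nl, (T.Adj n x ∧ x ≠ c) ∧ ∃ y, T.Adj x y ∧ y ≠ n := by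
        intro x h; simpa [hnldef] using h
      have hl₀lc : ℓ₀ ∈ lc := lcI ℓ₀ ⟨hℓ₀a, hℓ₀c⟩ hℓ₀leaf
      have lcnl : ∀ ℓ ∈ lc, ∀ x ∈ nl, ℓ ≠ x := by
        intro ℓ hℓ x hx hcon
        obtain ⟨_, hleaf⟩ := lcP ℓ hℓ
        obtain ⟨_, y, hy1, hy2⟩ := nlP x hx
        exact hy2 (hleaf y (hcon ▸ hy1))
      have hsubs : ∀ x ∈ nl, ∃ s, GoodS T n x s := by
        intro x hx
        obtain ⟨⟨hxa, hxc⟩, y, hya, hyn⟩ := nlP x hx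
        apply IH n x hxa
        · intro q hq
          obtain ⟨hq1, hq2, _⟩ := branchsub hT hadj hxa hxc hq
          have hb := hbound q hq1
          have e1 : T.dist n q = T.dist q n := SimpleGraph.dist_comm
          have e2 : T.dist x q = T.dist q x := SimpleGraph.dist_comm
          omega
        · exact ⟨y, hya, hyn⟩
      choose F hF using hsubs
      set sysA : Finset (V × ℕ × V) := lc.image (fun ℓ => (ℓ, 1, ℓ)) with hsysA
      set sysB : Finset (V × ℕ × V) := nl.attach.biUnion (fun a => F a.1 a.2) with hsysB
      have memA : ∀ b ∈ sysA, ∃ ℓ, ℓ ∈ lc ∧ b = (ℓ, (1 : ℕ), ℓ) := by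
        intro b hb
        simp only [hsysA, mem_image] at hb
        obtain ⟨ℓ, h1, h2⟩ := hb
        exact ⟨ℓ, h1, h2.symm⟩
      have memAI : ∀ ℓ ∈ lc, (ℓ, (1:ℕ), ℓ) ∈ sysA := by
        intro ℓ h; simp only [hsysA, mem_image]; exact ⟨ℓ, h, rfl⟩
      have memB : ∀ b ∈ sysB, ∃ x, ∃ h : x ∈ nl, b ∈ F x h := by
        intro b hb
        simp only [hsysB, mem_biUnion, mem_attach, true_and] at hb
        obtain ⟨⟨x, hx⟩, h2⟩ := hb
        exact ⟨x, hx, h2⟩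
      have memBI : ∀ x, ∀ h : x ∈ nl, ∀ b ∈ F x h, b ∈ sysB := by
        intro x h b hb
        simp only [hsysB, mem_biUnion, mem_attach, true_and]
        exact ⟨⟨x, h⟩, hb⟩
      -- basic facts about balls of sub-systems
      have factB : ∀ x, ∀ hx : x ∈ nl, ∀ b ∈ F x hx,
          brd T n x b.1 ∧ 1 ≤ b.2.1 ∧ b.2.1 ≤ T.dist x b.1 ∧
          brd T c n b.1 ∧ T.dist b.1 n = T.dist b.1 x + 1 ∧ T.dist b.1 c = T.dist b.1 x + 2 := by
        intro x hx b hb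
        obtain ⟨⟨hxa, hxc⟩, _⟩ := nlP x hx
        obtain ⟨h1, h2, h3⟩ := (hF x hx).2.1 b hb
        obtain ⟨g1, g2, g3⟩ := branchsub hT hadj hxa hxc h1
        exact ⟨h1, h2, h3, g1, g2, g3⟩
      -- a leaf child is not in any nonleaf branch
      have hlnb : ∀ ℓ ∈ lc, ∀ x ∈ nl, ¬ brd T n x ℓ := by
        intro ℓ hℓ x hx hcon
        have hne : ℓ ≠ x := lcnl ℓ hℓ x hx
        have h1 : T.dist ℓ n = 1 :=
          SimpleGraph.dist_eq_one_iff_adj.mpr (lcP ℓ hℓ).1.1.symm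
        have h2 : T.dist ℓ x < T.dist ℓ n := hcon
        have h3 : T.dist ℓ x = 0 := by omega
        exact hne ((hT.isConnected.dist_eq_zero_iff).mp h3)
      -- branches of different nonleaf children are disjoint
      have hBB : ∀ x ∈ nl, ∀ x' ∈ nl, x ≠ x' → ∀ q, brd T n x q → ¬ brd T n x' q := by
        intro x hx x' hx' hne q hq
        exact (children_sep hT (nlP x hx).1.1 (nlP x' hx').1.1 hne hq).1
      have hdisj : Disjoint sysA sysB := by
        rw [Finset.disjoint_left]
        intro b hbA hbB
        obtain ⟨ℓ, hℓ, rfl⟩ := memA b hbA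
        obtain ⟨x, hx, hbF⟩ := memB _ hbB
        have := (factB x hx _ hbF).1
        exact hlnb ℓ hℓ x hx this
      refine ⟨sysA ∪ sysB, ?_, ?_, ?_, ?_, ?_⟩
      · -- injectivity of centers
        intro b hb b' hb' hcent
        rcases Finset.mem_union.mp hb with hbA | hbB <;>
          rcases Finset.mem_union.mp hb' with hb'A | hb'B
        · obtain ⟨ℓ, _, rfl⟩ := memA b hbA
          obtain ⟨ℓ', _, rfl⟩ := memA b' hb'A
          simp only at hcent
          rw [hcent]
        · obtain ⟨ℓ, hℓ, rfl⟩ := memA b hbA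
          obtain ⟨x, hx, hbF⟩ := memB b' hb'B
          have h1 := (factB x hx b' hbF).1
          rw [← hcent] at h1
          exact absurd h1 (hlnb ℓ hℓ x hx)
        · obtain ⟨ℓ, hℓ, rfl⟩ := memA b' hb'A
          obtain ⟨x, hx, hbF⟩ := memB b hbB
          have h1 := (factB x hx b hbF).1
          rw [hcent] at h1
          exact absurd h1 (hlnb ℓ hℓ x hx)
        · obtain ⟨x, hx, hbF⟩ := memB b hbB
          obtain ⟨x', hx', hbF'⟩ := memB b' hb'B
          by_cases hxx : x = x'
          · subst hxx
            exact (hF x hx).1 b hbF b' hbF' hcent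
          · have h1 := (factB x hx b hbF).1
            have h2 := (factB x' hx' b' hbF').1
            rw [← hcent] at h2
            exact absurd h2 (hBB x hx x' hx' hxx b.1 h1)
      · -- base facts
        intro b hb
        rcases Finset.mem_union.mp hb with hbA | hbB
        · obtain ⟨ℓ, hℓ, rfl⟩ := memA b hbA
          obtain ⟨⟨ha, hc⟩, _⟩ := lcP ℓ hℓ
          obtain ⟨e1, e2, e3⟩ := child_facts hT hadj ha hc
          have e4 : T.dist n ℓ = 1 := SimpleGraph.dist_eq_one_iff_adj.mpr ha
          exact ⟨e3, le_refl 1, by show (1:ℕ) ≤ T.dist n ℓ; omega⟩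
        · obtain ⟨x, hx, hbF⟩ := memB b hbB
          obtain ⟨h1, h2, h3, h4, h5, h6⟩ := factB x hx b hbF
          have e1 : T.dist n b.1 = T.dist b.1 n := SimpleGraph.dist_comm
          have e2 : T.dist x b.1 = T.dist b.1 x := SimpleGraph.dist_comm
          exact ⟨h4, h2, by omega⟩
      · -- coverage
        intro q hq
        by_cases hqn : q = n
        · refine ⟨(ℓ₀, 1, ℓ₀), Finset.mem_union_left _ (memAI ℓ₀ hl₀lc), ?_⟩
          have e : T.dist n ℓ₀ = 1 := SimpleGraph.dist_eq_one_iff_adj.mpr hℓ₀a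
          subst hqn
          show T.dist q ℓ₀ ≤ 1
          omega
        · have hd0 : T.dist n q ≠ 0 := fun h => hqn ((hT.isConnected.dist_eq_zero_iff).mp h).symm
          have hd1 : T.dist n q = (T.dist n q - 1) + 1 := by omega
          obtain ⟨z, hz1, hz2⟩ := exists_adj_dist hT hd1
          have hzc : z ≠ c := by
            intro h
            subst h
            have e1 : T.dist q z = T.dist z q := SimpleGraph.dist_comm
            have e2 : T.dist q n = T.dist n q := SimpleGraph.dist_comm
            have : T.dist q z = T.dist q n + 1 := (brd_iff hT hadj q).mp hq
            omega
          have hqz : brd T n z q := by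
            unfold brd
            have e1 : T.dist q z = T.dist z q := SimpleGraph.dist_comm
            have e2 : T.dist q n = T.dist n q := SimpleGraph.dist_comm
            omega
          by_cases hzl : ∀ y, T.Adj z y → y = n
          · have hqz2 : q = z := singleton_branch hT hz1 hzl q hqz
            refine ⟨(z, 1, z), Finset.mem_union_left _ (memAI z (lcI z ⟨hz1, hzc⟩ hzl)), ?_⟩
            subst hqz2
            simp [SimpleGraph.dist_self]
          · push_neg at hzl
            obtain ⟨y, hy1, hy2⟩ := hzl
            have hznl : z ∈ nl := nlI z ⟨hz1, hzc⟩ ⟨y, hy1, hy2⟩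
            obtain ⟨b, hb, hble⟩ := (hF z hznl).2.2.1 q hqz
            exact ⟨b, Finset.mem_union_right _ (memBI z hznl b hb), hble⟩
      · -- cost
        intro q hq
        have hsum : ∑ b ∈ sysA ∪ sysB, b.2.1 = (∑ b ∈ sysA, b.2.1) + ∑ b ∈ sysB, b.2.1 :=
          Finset.sum_union hdisj
        have hsumA : (∑ b ∈ sysA, b.2.1) = lc.card := by
          rw [hsysA, Finset.sum_image]
          · simp
          · intro a _ b _ h
            simpa using congrArg Prod.fst h
        have hcard : 1 ≤ lc.card := Finset.card_pos.mpr ⟨ℓ₀, hl₀lc⟩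
        by_cases hqn : q = n
        · subst hqn
          simp [SimpleGraph.dist_self]
        · have hd0 : T.dist n q ≠ 0 := fun h => hqn ((hT.isConnected.dist_eq_zero_iff).mp h).symm
          have hd1 : T.dist n q = (T.dist n q - 1) + 1 := by omega
          obtain ⟨z, hz1, hz2⟩ := exists_adj_dist hT hd1
          have hzc : z ≠ c := by
            intro h
            subst h
            have e1 : T.dist q z = T.dist z q := SimpleGraph.dist_comm
            have e2 : T.dist q n = T.dist n q := SimpleGraph.dist_comm
            have : T.dist q z = T.dist q n + 1 := (brd_iff hT hadj q).mp hq
            omega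
          have hqz : brd T n z q := by
            unfold brd
            have e1 : T.dist q z = T.dist z q := SimpleGraph.dist_comm
            have e2 : T.dist q n = T.dist n q := SimpleGraph.dist_comm
            omega
          by_cases hzl : ∀ y, T.Adj z y → y = n
          · have hqz2 : q = z := singleton_branch hT hz1 hzl q hqz
            have : T.dist n q = 1 := by
              subst hqz2
              exact SimpleGraph.dist_eq_one_iff_adj.mpr hz1
            omega
          · push_neg at hzl
            obtain ⟨y, hy1, hy2⟩ := hzl
            have hznl : z ∈ nl := nlI z ⟨hz1, hzc⟩ ⟨y, hy1, hy2⟩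
            have hcost := (hF z hznl).2.2.2.1 q hqz
            have hsub : F z hznl ⊆ sysB := by
              intro b hb; exact memBI z hznl b hb
            have hle : (∑ b ∈ F z hznl, b.2.1) ≤ ∑ b ∈ sysB, b.2.1 :=
              Finset.sum_le_sum_of_subset hsub
            have hdq : T.dist z q = T.dist n q - 1 := hz2
            omega
      · -- privates
        intro b hb
        rcases Finset.mem_union.mp hb with hbA | hbB
        · obtain ⟨ℓ, hℓ, rfl⟩ := memA b hbA
          obtain ⟨⟨ha, hc⟩, hleaf⟩ := lcP ℓ hℓ
          obtain ⟨e1, e2, e3⟩ := child_facts hT hadj ha hc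
          refine ⟨e3, Or.inr ⟨rfl, rfl⟩, ?_⟩
          intro b' hb' hne
          rcases Finset.mem_union.mp hb' with hb'A | hb'B
          · obtain ⟨ℓ', hℓ', rfl⟩ := memA b' hb'A
            have hℓne : ℓ' ≠ ℓ := by
              intro h; exact hne (by rw [h])
            have := dist_children hT (lcP ℓ' hℓ').1.1 ha hℓne
            simpa using by omega
          · obtain ⟨x, hx, hbF⟩ := memB b' hb'B
            obtain ⟨h1, h2, h3, _, _, _⟩ := factB x hx b' hbF
            have hxℓ : x ≠ ℓ := fun h => lcnl ℓ hℓ x hx h.symm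
            have hsep := (children_sep hT (nlP x hx).1.1 ha hxℓ h1).2
            have ec : T.dist x b'.1 = T.dist b'.1 x := SimpleGraph.dist_comm
            simp only
            omega
        · obtain ⟨x, hx, hbF⟩ := memB b hbB
          obtain ⟨hxa', hxc'⟩ := (nlP x hx).1
          obtain ⟨hp1, hp2, hp3⟩ := (hF x hx).2.2.2.2 b hbF
          obtain ⟨g1, g2, g3⟩ := branchsub hT hadj hxa' hxc' hp1
          refine ⟨g1, hp2, ?_⟩
          intro b' hb' hne
          rcases Finset.mem_union.mp hb' with hb'A | hb'B
          · obtain ⟨ℓ, hℓ, rfl⟩ := memA b' hb'A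
            have hxℓ : x ≠ ℓ := fun h => lcnl ℓ hℓ x hx h.symm
            have hsep := (children_sep hT hxa' (lcP ℓ hℓ).1.1 hxℓ hp1).2
            have ec : T.dist b.2.2 ℓ = T.dist ℓ b.2.2 := SimpleGraph.dist_comm
            simp only
            omega
          · obtain ⟨x', hx', hbF'⟩ := memB b' hb'B
            by_cases hxx : x' = x
            · subst hxx
              exact hp3 b' hbF' hne
            · obtain ⟨h1', h2', h3', _, _, _⟩ := factB x' hx' b' hbF'
              have hnb : ¬ brd T n x' b.2.2 := hBB x hx x' hx' (fun h => hxx h.symm) b.2.2 hp1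
              have hg := glue hT (nlP x' hx').1.1 h1' hnb
              have ec : T.dist x' b'.1 = T.dist b'.1 x' := SimpleGraph.dist_comm
              omega
    · -- CASE C'
      push_neg at hlc0
      have hnolf : ∀ ℓ, T.Adj n ℓ → ℓ ≠ c → ∃ z, T.Adj ℓ z ∧ z ≠ n := by
        intro ℓ h1 h2
        exact hlc0 ℓ ⟨h1, h2⟩
      set S : Finset V := univ.filter (fun q => brd T c n q) with hSdef
      have hnS : n ∈ S := by
        simp only [hSdef, mem_filter, mem_univ, true_and]
        exact brd_self hT hadj
      set M : ℕ := S.sup (fun q => T.dist n q) with hMdef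
      have hM_le : ∀ q, brd T c n q → T.dist n q ≤ M := by
        intro q hq
        apply Finset.le_sup
        simp only [hSdef, mem_filter, mem_univ, true_and]
        exact hq
      obtain ⟨y, hyS, hyM⟩ : ∃ y ∈ S, T.dist n y = M := by
        obtain ⟨y, hy1, hy2⟩ := Finset.exists_mem_eq_sup S ⟨n, hnS⟩ (fun q => T.dist n q)
        exact ⟨y, hy1, hy2.symm⟩
      have hyBrd : brd T c n y := by
        simpa only [hSdef, mem_filter, mem_univ, true_and] using hyS
      have hyn : T.dist y n = M := SimpleGraph.dist_comm.trans hyM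
      have hyc : T.dist y c = M + 1 := by
        have := glue hT hadj hyBrd (not_brd_base hT hadj)
        have e0 : T.dist c c = 0 := SimpleGraph.dist_self
        omega
      obtain ⟨x₀, hx₀a, hx₀c⟩ := hex
      obtain ⟨y₀, hy₀a, hy₀n⟩ := hnolf x₀ hx₀a hx₀c
      have hg2 : T.dist n y₀ = 2 := dist_children hT hx₀a.symm hy₀a (fun h => hy₀n h.symm)
      have hy₀x₀ : brd T n x₀ y₀ := by
        unfold brd
        have e1 : T.dist y₀ x₀ = 1 := SimpleGraph.dist_eq_one_iff_adj.mpr hy₀a.symm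
        have e2 : T.dist y₀ n = 2 := SimpleGraph.dist_comm.trans hg2
        omega
      have hM2 : 2 ≤ M := by
        have h1 := hM_le y₀ (branchsub hT hadj hx₀a hx₀c hy₀x₀).1
        omega
      have hballbrd : ∀ q, T.dist y q ≤ M → brd T c n q := by
        intro q hdq
        by_contra hq
        have := glue hT hadj hyBrd hq
        omega
      set P : Finset V := univ.filter (fun ρ => brd T c n ρ ∧ T.dist y ρ = M + 1) with hPdef
      have hPfact : ∀ ρ ∈ P, brd T c n ρ ∧ T.dist y ρ = M + 1 := by
        intro ρ h
        simpa only [hPdef, mem_filter, mem_univ, true_and] using h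
      have hPI : ∀ ρ, brd T c n ρ → T.dist y ρ = M + 1 → ρ ∈ P := by
        intro ρ h1 h2
        simp only [hPdef, mem_filter, mem_univ, true_and]
        exact ⟨h1, h2⟩
      have hpar : ∀ ρ, ρ ∈ P → ∃ w, T.Adj ρ w ∧ T.dist w y = M := by
        intro ρ hρ
        have hd : T.dist ρ y = M + 1 := SimpleGraph.dist_comm.trans (hPfact ρ hρ).2
        exact exists_adj_dist hT hd
      choose par parAdj parDist using hpar
      have hynotc : ∀ ρ (hρ : ρ ∈ P), ¬ brd T (par ρ hρ) ρ y := by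
        intro ρ hρ hcon
        have h1 : T.dist y ρ = M + 1 := (hPfact ρ hρ).2
        have h2 : T.dist y (par ρ hρ) = M := SimpleGraph.dist_comm.trans (parDist ρ hρ)
        unfold brd at hcon
        omega
      have compGlue : ∀ ρ (hρ : ρ ∈ P), ∀ q, brd T (par ρ hρ) ρ q → ∀ x, ¬ brd T (par ρ hρ) ρ x →
          T.dist q x = T.dist q ρ + 1 + T.dist (par ρ hρ) x := by
        intro ρ hρ q hq x hx
        exact glue hT (parAdj ρ hρ).symm hq hx
      have compDy : ∀ ρ (hρ : ρ ∈ P), ∀ q, brd T (par ρ hρ) ρ q →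
          T.dist q y = T.dist q ρ + 1 + M := by
        intro ρ hρ q hq
        have h1 := compGlue ρ hρ q hq y (hynotc ρ hρ)
        have e : T.dist (par ρ hρ) y = M := parDist ρ hρ
        omega
      have hnnotc : ∀ ρ (hρ : ρ ∈ P), ¬ brd T (par ρ hρ) ρ n := by
        intro ρ hρ hcon
        have h1 := compDy ρ hρ n hcon
        have e : T.dist n y = M := hyM
        omega
      have hcnotc : ∀ ρ (hρ : ρ ∈ P), ¬ brd T (par ρ hρ) ρ c := by
        intro ρ hρ hcon
        have h1 := compDy ρ hρ c hcon
        have e1 : T.dist c y = M + 1 := SimpleGraph.dist_comm.trans hyc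
        have e2 : T.dist c ρ = 0 := by omega
        have e3 : c = ρ := (hT.isConnected.dist_eq_zero_iff).mp e2
        have h4 := (hPfact ρ hρ).1
        rw [← e3] at h4
        exact (not_brd_base hT hadj) h4
      have parBrd : ∀ ρ (hρ : ρ ∈ P), brd T c n (par ρ hρ) := by
        intro ρ hρ
        apply hballbrd
        have h1 := parDist ρ hρ
        have e : T.dist y (par ρ hρ) = M := SimpleGraph.dist_comm.trans h1
        omega
      have compF : ∀ ρ (hρ : ρ ∈ P), ∀ q, brd T (par ρ hρ) ρ q →
          brd T c n q ∧ T.dist q n = T.dist q ρ + 1 + T.dist (par ρ hρ) n ∧ T.dist ρ q ≤ m := by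
        intro ρ hρ q hq
        have g1 := compGlue ρ hρ q hq n (hnnotc ρ hρ)
        have g2 := compGlue ρ hρ q hq c (hcnotc ρ hρ)
        have hpb := parBrd ρ hρ
        have hpc : T.dist (par ρ hρ) c = T.dist (par ρ hρ) n + 1 := (brd_iff hT hadj _).mp hpb
        have hbrdq : brd T c n q := by
          unfold brd
          omega
        refine ⟨hbrdq, g1, ?_⟩
        have hb := hbound q hbrdq
        have e1 : T.dist n q = T.dist q n := SimpleGraph.dist_comm
        have e2 : T.dist ρ q = T.dist q ρ := SimpleGraph.dist_comm
        omega
      have compId : ∀ ρ (hρ : ρ ∈ P) ρ' (hρ' : ρ' ∈ P), ρ' ≠ ρ → ¬ brd T (par ρ hρ) ρ ρ' := by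
        intro ρ hρ ρ' hρ' hne hcon
        have h1 := compDy ρ hρ ρ' hcon
        have h2 : T.dist ρ' y = M + 1 := SimpleGraph.dist_comm.trans (hPfact ρ' hρ').2
        have e2 : T.dist ρ' ρ = 0 := by omega
        exact hne ((hT.isConnected.dist_eq_zero_iff).mp e2)
      have compDisj : ∀ ρ (hρ : ρ ∈ P) ρ' (hρ' : ρ' ∈ P), ρ ≠ ρ' →
          ∀ q, brd T (par ρ hρ) ρ q → ¬ brd T (par ρ' hρ') ρ' q := by
        intro ρ hρ ρ' hρ' hne q hq hq'
        have h1 := compDy ρ hρ q hq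
        have h2 := compDy ρ' hρ' q hq'
        have h3 : T.dist q ρ = T.dist q ρ' := by omega
        have h4 : ¬ brd T (par ρ hρ) ρ ρ' := compId ρ hρ ρ' hρ' (fun h => hne h.symm)
        have h5 := compGlue ρ hρ q hq ρ' h4
        omega
      have parNot : ∀ ρ (hρ : ρ ∈ P) ρ' (hρ' : ρ' ∈ P), ¬ brd T (par ρ hρ) ρ (par ρ' hρ') := by
        intro ρ hρ ρ' hρ' hcon
        have h1 := compDy ρ hρ _ hcon
        have h2 : T.dist (par ρ' hρ') y = M := parDist ρ' hρ'
        omega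
      have hsubs : ∀ ρ (hρ : ρ ∈ P), ∃ s : Finset (V × ℕ × V),
          (GoodS T (par ρ hρ) ρ s) ∨
          ((∀ z, T.Adj ρ z → z = par ρ hρ) ∧ s = {(ρ, 1, ρ)}) := by
        intro ρ hρ
        by_cases hleaf : ∀ z, T.Adj ρ z → z = par ρ hρ
        · exact ⟨{(ρ, 1, ρ)}, Or.inr ⟨hleaf, rfl⟩⟩
        · push_neg at hleaf
          obtain ⟨z, hz1, hz2⟩ := hleaf
          obtain ⟨s, hs⟩ := IH (par ρ hρ) ρ (parAdj ρ hρ).symm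
            (fun q hq => by
              have h1 := (compF ρ hρ q hq).2.2
              have e : T.dist ρ q = T.dist q ρ := SimpleGraph.dist_comm
              omega)
            ⟨z, hz1, hz2⟩
          exact ⟨s, Or.inl hs⟩
      choose G hG using hsubs
      have subball : ∀ ρ (hρ : ρ ∈ P), ∀ b ∈ G ρ hρ,
          brd T (par ρ hρ) ρ b.1 ∧ 1 ≤ b.2.1 ∧ b.2.1 ≤ T.dist ρ b.1 + 1 ∧
          (b.2.1 ≤ T.dist ρ b.1 ∨
            (b = (ρ, 1, ρ) ∧ ∀ z, T.Adj ρ z → z = par ρ hρ)) := by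
        intro ρ hρ b hb
        rcases hG ρ hρ with hgood | ⟨hleaf, hsing⟩
        · obtain ⟨h1, h2, h3⟩ := hgood.2.1 b hb
          exact ⟨h1, h2, by omega, Or.inl h3⟩
        · rw [hsing] at hb
          simp only [Finset.mem_singleton] at hb
          subst hb
          refine ⟨?_, le_refl 1, ?_, Or.inr ⟨rfl, hleaf⟩⟩
          · show T.dist ρ ρ < T.dist ρ (par ρ hρ)
            have e1 : T.dist ρ ρ = 0 := SimpleGraph.dist_self
            have e2 : T.dist ρ (par ρ hρ) = 1 :=
              SimpleGraph.dist_eq_one_iff_adj.mpr (parAdj ρ hρ)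
            omega
          · show (1:ℕ) ≤ T.dist ρ ρ + 1
            omega
      have leafFar : ∀ ρ (hρ : ρ ∈ P), (∀ z, T.Adj ρ z → z = par ρ hρ) → 2 ≤ T.dist ρ n := by
        intro ρ hρ hleaf
        have hρn : ρ ≠ n := by
          intro h
          have h1 := (hPfact ρ hρ).2
          rw [h] at h1
          omega
        have hnotadj : ¬ T.Adj ρ n := by
          intro hadjn
          have h1 : n = par ρ hρ := hleaf n hadjn
          obtain ⟨z, hz1, hz2⟩ := hnolf ρ hadjn.symm
            (by
              intro h
              rw [h] at hρ
              exact (not_brd_base hT hadj) (hPfact c hρ).1)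
          exact hz2 ((hleaf z hz1).trans h1.symm)
        have h0 : T.dist ρ n ≠ 0 := fun h => hρn ((hT.isConnected.dist_eq_zero_iff).mp h)
        have h1 : T.dist ρ n ≠ 1 := fun h => hnotadj (SimpleGraph.dist_eq_one_iff_adj.mp h)
        omega
      set sysC : Finset (V × ℕ × V) :=
        insert (y, M, n) (P.attach.biUnion (fun a => G a.1 a.2)) with hsysC
      have memCI : ∀ ρ (hρ : ρ ∈ P), ∀ b ∈ G ρ hρ, b ∈ sysC := by
        intro ρ hρ b hb
        apply Finset.mem_insert_of_mem
        simp only [mem_biUnion, mem_attach, true_and]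
        exact ⟨⟨ρ, hρ⟩, hb⟩
      have memC : ∀ b ∈ sysC, b = (y, M, n) ∨ ∃ ρ, ∃ hρ : ρ ∈ P, b ∈ G ρ hρ := by
        intro b hb
        rcases Finset.mem_insert.mp hb with h | h
        · exact Or.inl h
        · right
          simp only [mem_biUnion, mem_attach, true_and] at h
          obtain ⟨⟨ρ, hρ⟩, h2⟩ := h
          exact ⟨ρ, hρ, h2⟩
      refine ⟨sysC, ?_, ?_, ?_, ?_, ?_⟩
      · -- center injectivity
        intro b hb b' hb' hcent
        rcases memC b hb with rfl | ⟨ρ, hρ, hbG⟩ <;>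
          rcases memC b' hb' with h' | ⟨ρ', hρ', hbG'⟩
        · rw [h']
        · have h1 := (subball ρ' hρ' b' hbG').1
          rw [← hcent] at h1
          exact absurd h1 (hynotc ρ' hρ')
        · have h1 := (subball ρ hρ b hbG).1
          rw [hcent, h'] at h1
          exact absurd h1 (hynotc ρ hρ)
        · by_cases hrr : ρ = ρ'
          · subst hrr
            rcases hG ρ hρ with hgood | ⟨_, hsing⟩
            · exact hgood.1 b hbG b' hbG' hcent
            · rw [hsing] at hbG hbG'
              simp only [Finset.mem_singleton] at hbG hbG'
              rw [hbG, hbG']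
          · have h1 := (subball ρ hρ b hbG).1
            have h2 := (subball ρ' hρ' b' hbG').1
            rw [← hcent] at h2
            exact absurd h2 (compDisj ρ hρ ρ' hρ' hrr b.1 h1)
      · -- base facts
        intro b hb
        rcases memC b hb with rfl | ⟨ρ, hρ, hbG⟩
        · exact ⟨hyBrd, by show (1:ℕ) ≤ M; omega, by show M ≤ T.dist n y; omega⟩
        · obtain ⟨h1, h2, h3, _⟩ := subball ρ hρ b hbG
          obtain ⟨g1, g2, _⟩ := compF ρ hρ b.1 h1
          have e1 : T.dist n b.1 = T.dist b.1 n := SimpleGraph.dist_comm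
          have e2 : T.dist ρ b.1 = T.dist b.1 ρ := SimpleGraph.dist_comm
          exact ⟨g1, h2, by omega⟩
      · -- coverage
        intro q hq
        by_cases hqy : T.dist y q ≤ M
        · refine ⟨(y, M, n), Finset.mem_insert_self _ _, ?_⟩
          show T.dist q y ≤ M
          have e : T.dist q y = T.dist y q := SimpleGraph.dist_comm
          omega
        · push_neg at hqy
          have hDle : M + 1 ≤ T.dist y q := hqy
          obtain ⟨ρ₀, hd1, hd2⟩ := exists_interp hT (M + 1) hDle
          have hρ₀brd : brd T c n ρ₀ := by
            by_contra hcon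
            have hg := glue hT hadj hyBrd hcon
            have e2 : T.dist c ρ₀ = 0 := by omega
            have e3 : c = ρ₀ := (hT.isConnected.dist_eq_zero_iff).mp e2
            subst e3
            have h5 : T.dist q c = T.dist q n + 1 := (brd_iff hT hadj q).mp hq
            have h6 : T.dist y q ≤ T.dist y n + T.dist n q := hT.isConnected.dist_triangle
            have e4 : T.dist c q = T.dist q c := SimpleGraph.dist_comm
            have e5 : T.dist n q = T.dist q n := SimpleGraph.dist_comm
            omega
          have hρ₀P : ρ₀ ∈ P := hPI ρ₀ hρ₀brd hd1
          have hqcomp : brd T (par ρ₀ hρ₀P) ρ₀ q := by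
            unfold brd
            have h6 : T.dist y q ≤ T.dist y (par ρ₀ hρ₀P) + T.dist (par ρ₀ hρ₀P) q :=
              hT.isConnected.dist_triangle
            have e1 : T.dist y (par ρ₀ hρ₀P) = M := SimpleGraph.dist_comm.trans (parDist ρ₀ hρ₀P)
            have e2 : T.dist q ρ₀ = T.dist ρ₀ q := SimpleGraph.dist_comm
            have e3 : T.dist q (par ρ₀ hρ₀P) = T.dist (par ρ₀ hρ₀P) q := SimpleGraph.dist_comm
            omega
          rcases hG ρ₀ hρ₀P with hgood | ⟨hleaf, hsing⟩
          · obtain ⟨b, hb, hble⟩ := hgood.2.2.1 q hqcomp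
            exact ⟨b, memCI ρ₀ hρ₀P b hb, hble⟩
          · have he : q = ρ₀ := singleton_branch hT (parAdj ρ₀ hρ₀P).symm hleaf q hqcomp
            refine ⟨(ρ₀, 1, ρ₀),
              memCI ρ₀ hρ₀P _ (by rw [hsing]; exact Finset.mem_singleton_self _), ?_⟩
            subst he
            show T.dist q q ≤ 1
            have e : T.dist q q = 0 := SimpleGraph.dist_self
            omega
      · -- cost
        intro q hq
        have hbig : (y, M, n) ∈ sysC := Finset.mem_insert_self _ _
        have hle : M ≤ ∑ b ∈ sysC, b.2.1 := by
          have h1 := Finset.single_le_sum (f := fun (b : V × ℕ × V) => b.2.1)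
            (fun b _ => Nat.zero_le _) hbig
          simpa using h1
        have h2 := hM_le q hq
        omega
      · -- privates
        intro b hb
        rcases memC b hb with rfl | ⟨ρ, hρ, hbG⟩
        · refine ⟨brd_self hT hadj, Or.inl (by show T.dist y n = M; omega), ?_⟩
          intro b' hb' hne
          rcases memC b' hb' with rfl | ⟨ρ', hρ', hbG'⟩
          · exact absurd rfl hne
          · obtain ⟨h1, h2, h3, h4⟩ := subball ρ' hρ' b' hbG'
            rcases h4 with h4 | ⟨hbeq, hleaf⟩
            · have hg := (compF ρ' hρ' b'.1 h1).2.1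
              have e2 : T.dist ρ' b'.1 = T.dist b'.1 ρ' := SimpleGraph.dist_comm
              show b'.2.1 < T.dist b'.1 n
              omega
            · have hfar := leafFar ρ' hρ' hleaf
              rw [hbeq]
              show (1:ℕ) < T.dist ρ' n
              omega
        · -- b is a ball of the component of ρ
          rcases hG ρ hρ with hgood | ⟨hleaf, hsing⟩
          · obtain ⟨hp1, hp2, hp3⟩ := hgood.2.2.2.2 b hbG
            have hpvF := compF ρ hρ b.2.2 hp1
            refine ⟨hpvF.1, hp2, ?_⟩
            intro b' hb' hne
            rcases memC b' hb' with rfl | ⟨ρ', hρ', hbG'⟩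
            · show M < T.dist y b.2.2
              have h1 := compDy ρ hρ b.2.2 hp1
              have e : T.dist y b.2.2 = T.dist b.2.2 y := SimpleGraph.dist_comm
              omega
            · by_cases hrr : ρ' = ρ
              · subst hrr
                exact hp3 b' hbG' hne
              · obtain ⟨h1', h2', h3', _⟩ := subball ρ' hρ' b' hbG'
                have hpvnot : ¬ brd T (par ρ' hρ') ρ' b.2.2 :=
                  compDisj ρ hρ ρ' hρ' (fun h => hrr h.symm) b.2.2 hp1
                have hg := compGlue ρ' hρ' b'.1 h1' b.2.2 hpvnot
                have hpv_ne_par : T.dist (par ρ' hρ') b.2.2 ≠ 0 := by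
                  intro h0
                  have e3 : par ρ' hρ' = b.2.2 := (hT.isConnected.dist_eq_zero_iff).mp h0
                  have := parNot ρ hρ ρ' hρ'
                  rw [e3] at this
                  exact this hp1
                have e2 : T.dist ρ' b'.1 = T.dist b'.1 ρ' := SimpleGraph.dist_comm
                omega
          · -- b = (ρ, 1, ρ)
            rw [hsing] at hbG
            simp only [Finset.mem_singleton] at hbG
            subst hbG
            refine ⟨(hPfact ρ hρ).1, Or.inr ⟨rfl, rfl⟩, ?_⟩
            intro b' hb' hne
            rcases memC b' hb' with rfl | ⟨ρ', hρ', hbG'⟩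
            · show M < T.dist y ρ
              have h1 := (hPfact ρ hρ).2
              omega
            · by_cases hrr : ρ' = ρ
              · subst hrr
                rw [hsing] at hbG'
                simp only [Finset.mem_singleton] at hbG'
                exact absurd hbG' hne
              · obtain ⟨h1', h2', h3', _⟩ := subball ρ' hρ' b' hbG'
                have hρnot : ¬ brd T (par ρ' hρ') ρ' ρ :=
                  compId ρ' hρ' ρ hρ (fun h => hrr h.symm)
                have hg := compGlue ρ' hρ' b'.1 h1' ρ hρnot
                have hρ_ne_par : T.dist (par ρ' hρ') ρ ≠ 0 := by
                  intro h0
                  have e3 : par ρ' hρ' = ρ := (hT.isConnected.dist_eq_zero_iff).mp h0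
                  have h4 := parDist ρ' hρ'
                  rw [e3] at h4
                  have h5 : T.dist y ρ = M + 1 := (hPfact ρ hρ).2
                  have e4 : T.dist ρ y = T.dist y ρ := SimpleGraph.dist_comm
                  omega
                have e2 : T.dist ρ' b'.1 = T.dist b'.1 ρ' := SimpleGraph.dist_comm
                show b'.2.1 < T.dist b'.1 ρ
                omega

end TreeBC5


namespace TreeBC6
open TreeBC TreeBC2 TreeBC3 TreeBC4 TreeBC5

variable {V : Type*} [Fintype V] {T : SimpleGraph V}

open scoped Classical

def GlobalGood (T : SimpleGraph V) [Fintype V] (sys : Finset (V × ℕ × V)) : Prop :=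
  (∀ b ∈ sys, ∀ b' ∈ sys, (b : V × ℕ × V).1 = (b' : V × ℕ × V).1 → b = b') ∧
  (∀ b ∈ sys, 1 ≤ b.2.1 ∧ b.2.1 ≤ _root_.eccent T b.1) ∧
  (∀ u : V, ∃ b ∈ sys, T.dist u b.1 ≤ b.2.1) ∧
  (∀ b ∈ sys, (T.dist b.1 b.2.2 = b.2.1 ∨ (b.2.1 = 1 ∧ b.2.2 = b.1)) ∧
      ∀ b' ∈ sys, b' ≠ b → b'.2.1 < T.dist b'.1 b.2.2)

noncomputable def sysFun (sys : Finset (V × ℕ × V)) : V → ℕ :=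
  fun v => ∑ b ∈ sys, if b.1 = v then b.2.1 else 0

lemma sysFun_center {sys : Finset (V × ℕ × V)}
    (hinj : ∀ b ∈ sys, ∀ b' ∈ sys, (b : V × ℕ × V).1 = (b' : V × ℕ × V).1 → b = b')
    {b : V × ℕ × V} (hb : b ∈ sys) : sysFun sys b.1 = b.2.1 := by
  unfold sysFun
  rw [Finset.sum_eq_single b]
  · simp
  · intro b' hb' hne
    have : ¬ (b'.1 = b.1) := fun h => hne (hinj b' hb' b hb h)
    simp [this]
  · intro h
    exact absurd hb h

lemma sysFun_noncenter {sys : Finset (V × ℕ × V)} {v : V}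
    (h : ∀ b ∈ sys, (b : V × ℕ × V).1 ≠ v) : sysFun sys v = 0 := by
  unfold sysFun
  apply Finset.sum_eq_zero
  intro b hb
  simp [h b hb]

lemma sysFun_cost (sys : Finset (V × ℕ × V)) : cost (sysFun sys) = ∑ b ∈ sys, b.2.1 := by
  unfold cost sysFun
  rw [Finset.sum_comm]
  apply Finset.sum_congr rfl
  intro b _
  simp

lemma globalGood_mdb {sys : Finset (V × ℕ × V)} (hGG : GlobalGood T sys) :
    MinimalDominatingBroadcast T (sysFun sys) := by
  obtain ⟨hinj, hbase, hcov, hpriv⟩ := hGG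
  classical
  refine ⟨?_, ?_, ?_⟩
  · -- broadcast
    intro v
    by_cases h : ∃ b ∈ sys, (b : V × ℕ × V).1 = v
    · obtain ⟨b, hb, rfl⟩ := h
      rw [sysFun_center hinj hb]
      exact (hbase b hb).2
    · push_neg at h
      rw [sysFun_noncenter h]
      exact Nat.zero_le _
  · -- dominates
    intro u
    obtain ⟨b, hb, hle⟩ := hcov u
    refine ⟨b.1, ?_, ?_⟩
    · rw [sysFun_center hinj hb]
      exact (hbase b hb).1
    · rw [sysFun_center hinj hb]
      exact hle
  · -- minimal
    intro g _hgb hgle hgne hgdom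
    have hv : ∃ v, g v < sysFun sys v := by
      by_contra h
      push_neg at h
      exact hgne (funext fun v => le_antisymm (hgle v) (h v))
    obtain ⟨v, hv⟩ := hv
    have hvc : ∃ b ∈ sys, (b : V × ℕ × V).1 = v := by
      by_contra h
      push_neg at h
      rw [sysFun_noncenter h] at hv
      omega
    obtain ⟨b, hb, rfl⟩ := hvc
    rw [sysFun_center hinj hb] at hv
    obtain ⟨w, hw1, hw2⟩ := hgdom b.2.2
    by_cases hwc : ∃ b' ∈ sys, (b' : V × ℕ × V).1 = w
    · obtain ⟨b', hb', hbw⟩ := hwc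
      rw [← hbw] at hw1 hw2
      have hgw : g b'.1 ≤ sysFun sys b'.1 := hgle b'.1
      rw [sysFun_center hinj hb'] at hgw
      by_cases hbb : b' = b
      · subst hbb
        rcases (hpriv b' hb).1 with hs | ⟨hr1, hpv⟩
        · have e : T.dist b'.2.2 b'.1 = T.dist b'.1 b'.2.2 := SimpleGraph.dist_comm
          omega
        · rw [hpv] at hw2
          have e : T.dist b'.1 b'.1 = 0 := SimpleGraph.dist_self
          omega
      · have hsep := (hpriv b hb).2 b' hb' hbb
        have e : T.dist b.2.2 b'.1 = T.dist b'.1 b.2.2 := SimpleGraph.dist_comm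
        omega
    · push_neg at hwc
      have h0 : sysFun sys w = 0 := sysFun_noncenter hwc
      have h1 : g w ≤ sysFun sys w := hgle w
      rw [h0] at h1
      omega

lemma upperBroadcast_ge {sys : Finset (V × ℕ × V)} (hGG : GlobalGood T sys) :
    (∑ b ∈ sys, b.2.1) ≤ upperBroadcast T := by
  have hmem : (∑ b ∈ sys, b.2.1) ∈
      {k : ℕ | ∃ f : V → ℕ, MinimalDominatingBroadcast T f ∧ cost f = k} :=
    ⟨sysFun sys, globalGood_mdb hGG, sysFun_cost sys⟩
  apply le_csSup ?_ hmem
  refine ⟨∑ v, _root_.eccent T v, ?_⟩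
  rintro k ⟨f, hf, rfl⟩
  exact Finset.sum_le_sum (fun v _ => hf.1 v)

end TreeBC6

open TreeBC TreeBC2 TreeBC3 TreeBC4 TreeBC5 TreeBC6 in
/-- If `T` is a tree with `diam(T) = d ≥ 2` and a diametral path `v_0, …, v_d`, and the
vertex `v_1` has at least two distinct neighbors off the path, then `Γ_b(T) > diam(T)`. -/
theorem tree_limb_near_endpoint_not_diametrical {V : Type*} [Fintype V] (T : SimpleGraph V)
    (hT : T.IsTree) (hd : 2 ≤ gDiam T)
    {v0 vd : V} (p : T.Walk v0 vd) (hp : p.IsPath) (hlen : p.length = gDiam T)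
    (u1 u2 : V) (hne : u1 ≠ u2)
    (h1 : T.Adj (p.getVert 1) u1) (h2 : T.Adj (p.getVert 1) u2)
    (hu1 : u1 ∉ p.support) (hu2 : u2 ∉ p.support) :
    gDiam T < upperBroadcast T := by
  classical
  set d := gDiam T with hd_def
  set v1 := p.getVert 1 with hv1
  set v2 := p.getVert 2 with hv2
  have hdle : ∀ a b : V, T.dist a b ≤ d := by
    intro a b
    have h1' : T.dist a b ≤ _root_.eccent T a := Finset.le_sup (Finset.mem_univ b)
    have h2' : _root_.eccent T a ≤ d := Finset.le_sup (Finset.mem_univ a)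
    omega
  have hdist0 : T.dist v0 vd = d := by
    rw [← path_len hT p hp, hlen]
  have haux1 : ∀ k, k ≤ d → T.dist v0 (p.getVert k) ≤ k := by
    intro k
    induction k with
    | zero =>
      intro _
      simp [Walk.getVert_zero, SimpleGraph.dist_self]
    | succ k ih =>
      intro hk
      have hadj : T.Adj (p.getVert k) (p.getVert (k + 1)) :=
        p.adj_getVert_succ (by omega)
      have h1' := dist_le_succ_of_adj hT hadj v0
      have h2' := ih (by omega)
      omega
  have haux2 : ∀ j, j ≤ d → T.dist (p.getVert (d - j)) vd ≤ j := by
    intro j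
    induction j with
    | zero =>
      intro _
      have : p.getVert (d - 0) = vd := by
        rw [Nat.sub_zero, ← hlen]
        exact p.getVert_length
      rw [this]
      simp [SimpleGraph.dist_self]
    | succ j ih =>
      intro hj
      have hadj : T.Adj (p.getVert (d - (j + 1))) (p.getVert (d - j)) := by
        have h := p.adj_getVert_succ (i := d - (j + 1)) (by omega)
        rwa [show d - (j + 1) + 1 = d - j by omega] at h
      have h1' := dist_le_succ_of_adj hT hadj.symm vd
      have h2' := ih (by omega)
      have e1 : T.dist vd (p.getVert (d - (j+1))) = T.dist (p.getVert (d - (j+1))) vd :=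
        SimpleGraph.dist_comm
      have e2 : T.dist vd (p.getVert (d - j)) = T.dist (p.getVert (d - j)) vd :=
        SimpleGraph.dist_comm
      omega
  have hgv : ∀ k, k ≤ d → T.dist v0 (p.getVert k) = k ∧ T.dist (p.getVert k) vd = d - k := by
    intro k hk
    have h1' := haux1 k hk
    have h2' := haux2 (d - k) (by omega)
    rw [show d - (d - k) = k by omega] at h2'
    have h3' : T.dist v0 vd ≤ T.dist v0 (p.getVert k) + T.dist (p.getVert k) vd :=
      hT.isConnected.dist_triangle
    omega
  have hA01 : T.Adj v0 v1 := by
    have h := p.adj_getVert_succ (i := 0) (by omega)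
    rwa [p.getVert_zero] at h
  have hA12 : T.Adj v1 v2 := p.adj_getVert_succ (by omega)
  have hd01 : T.dist v0 v1 = 1 := (hgv 1 (by omega)).1
  have hd02 : T.dist v0 v2 = 2 := (hgv 2 (by omega)).1
  have hd2d : T.dist v2 vd = d - 2 := (hgv 2 (by omega)).2
  have hd1d : T.dist v1 vd = d - 1 := by
    have h2' := (hgv 1 (by omega)).2
    rw [← hv1] at h2'
    exact h2'
  have hv0v2 : v0 ≠ v2 := by
    intro h
    rw [h] at hd02
    simp [SimpleGraph.dist_self] at hd02
  have hv2mem : v2 ∈ p.support :=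
    Walk.mem_support_iff_exists_getVert.mpr ⟨2, rfl, by rw [hlen]; omega⟩
  have hu1v2 : u1 ≠ v2 := by
    intro h
    exact hu1 (h ▸ hv2mem)
  have hu2v2 : u2 ≠ v2 := by
    intro h
    exact hu2 (h ▸ hv2mem)
  have hu1v0 : u1 ≠ v0 := by
    intro h
    exact hu1 (h ▸ p.start_mem_support)
  have hu2v0 : u2 ≠ v0 := by
    intro h
    exact hu2 (h ▸ p.start_mem_support)
  have hv0adj : T.Adj v1 v0 := hA01.symm
  -- `x ∉ S` vertices are v1 or its neighbors
  by_cases hd2 : d = 2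
  · -- star case
    have hstar : ∀ u : V, u ≠ v1 → T.Adj v1 u := by
      intro u hu
      by_contra hna
      have hdu : T.dist v1 u ≤ 2 := hd2 ▸ hdle v1 u
      have hdu0 : T.dist v1 u ≠ 0 := fun h =>
        hu (((hT.isConnected.dist_eq_zero_iff).mp h).symm)
      have hdu1 : T.dist v1 u ≠ 1 := fun h => hna (SimpleGraph.dist_eq_one_iff_adj.mp h)
      have hdu2 : T.dist v1 u = 1 + 1 := by omega
      obtain ⟨z, hz1, hz2⟩ := exists_adj_dist hT hdu2
      have hzu : T.Adj z u := SimpleGraph.dist_eq_one_iff_adj.mp hz2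
      have key : ∀ t, T.Adj v1 t → z ≠ t → False := by
        intro t ht hzt
        have hut : u ≠ t := by
          intro h
          subst h
          exact hdu1 (SimpleGraph.dist_eq_one_iff_adj.mpr ht)
        have huz : u ≠ z := hzu.ne'
        have huv1 : u ≠ v1 := hu
        have hzv1 : z ≠ v1 := hz1.ne'
        have htv1 : v1 ≠ t := ht.ne
        have hW : (Walk.cons hzu.symm (Walk.cons hz1.symm (Walk.cons ht Walk.nil))).IsPath := by
          simp [Walk.isPath_def]
          exact ⟨⟨huz, huv1, hut⟩, ⟨hzv1, hzt⟩, htv1⟩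
        have := path_len hT _ hW
        have hle := hd2 ▸ hdle u t
        simp at this
        omega
      by_cases hz0 : z = v0
      · exact key v2 hA12 (by rw [hz0]; exact hv0v2)
      · exact key v0 hv0adj hz0
    set sys : Finset (V × ℕ × V) :=
      (univ.filter (fun x => T.Adj v1 x)).image (fun x => (x, 1, x)) with hsys
    have memS : ∀ b ∈ sys, ∃ x, T.Adj v1 x ∧ b = (x, (1:ℕ), x) := by
      intro b hb
      simp only [hsys, mem_image, mem_filter, mem_univ, true_and] at hb
      obtain ⟨x, h1', h2'⟩ := hb
      exact ⟨x, h1', h2'.symm⟩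
    have memSI : ∀ x, T.Adj v1 x → (x, (1:ℕ), x) ∈ sys := by
      intro x hx
      simp only [hsys, mem_image, mem_filter, mem_univ, true_and]
      exact ⟨x, hx, rfl⟩
    have hGG : GlobalGood T sys := by
      refine ⟨?_, ?_, ?_, ?_⟩
      · intro b hb b' hb' hc
        obtain ⟨x, _, rfl⟩ := memS b hb
        obtain ⟨x', _, rfl⟩ := memS b' hb'
        simp only at hc
        rw [hc]
      · intro b hb
        obtain ⟨x, hx, rfl⟩ := memS b hb
        have h1' : T.dist x v1 = 1 := SimpleGraph.dist_eq_one_iff_adj.mpr hx.symm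
        have h2' : T.dist x v1 ≤ _root_.eccent T x := Finset.le_sup (Finset.mem_univ v1)
        exact ⟨le_refl 1, by show (1:ℕ) ≤ _root_.eccent T x; omega⟩
      · intro u
        by_cases hu : u = v1
        · refine ⟨(v0, 1, v0), memSI v0 hv0adj, ?_⟩
          show T.dist u v0 ≤ 1
          subst hu
          have : T.dist v1 v0 = 1 := SimpleGraph.dist_eq_one_iff_adj.mpr hv0adj
          omega
        · refine ⟨(u, 1, u), memSI u (hstar u hu), ?_⟩
          show T.dist u u ≤ 1
          have : T.dist u u = 0 := SimpleGraph.dist_self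
          omega
      · intro b hb
        obtain ⟨x, hx, rfl⟩ := memS b hb
        refine ⟨Or.inr ⟨rfl, rfl⟩, ?_⟩
        intro b' hb' hne'
        obtain ⟨x', hx', rfl⟩ := memS b' hb'
        have hxx : x' ≠ x := by
          intro h
          subst h
          exact hne' rfl
        have := dist_children hT hx' hx hxx
        show (1:ℕ) < T.dist x' x
        omega
    have hcard : 4 ≤ ∑ b ∈ sys, b.2.1 := by
      have hsum : ∑ b ∈ sys, b.2.1 = (univ.filter (fun x => T.Adj v1 x)).card := by
        rw [hsys, Finset.sum_image]
        · simp
        · intro a _ b _ h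
          simpa using congrArg Prod.fst h
      have hsubset : ({v0, v2, u1, u2} : Finset V) ⊆ univ.filter (fun x => T.Adj v1 x) := by
        intro x hx
        simp only [Finset.mem_insert, Finset.mem_singleton] at hx
        simp only [mem_filter, mem_univ, true_and]
        rcases hx with rfl | rfl | rfl | rfl
        · exact hv0adj
        · exact hA12
        · exact h1
        · exact h2
      have hcard4 : ({v0, v2, u1, u2} : Finset V).card = 4 := by
        rw [Finset.card_insert_of_notMem, Finset.card_insert_of_notMem,
          Finset.card_insert_of_notMem, Finset.card_singleton]
        · simp [hne]
        · simp
          exact ⟨hu1v2.symm, hu2v2.symm⟩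
        · simp
          exact ⟨hv0v2, hu1v0.symm, hu2v0.symm⟩
      have := Finset.card_le_card hsubset
      omega
    have hub := upperBroadcast_ge hGG
    omega
  · -- main case : d ≥ 3
    have hd3 : 3 ≤ d := by omega
    have hbrd_v0 : ¬ brd T v1 v2 v0 := by
      unfold brd
      omega
    have hbrd_vd : brd T v1 v2 vd := by
      unfold brd
      have e1 : T.dist vd v2 = d - 2 := SimpleGraph.dist_comm.trans hd2d
      have e2 : T.dist vd v1 = d - 1 := SimpleGraph.dist_comm.trans hd1d
      omega
    have hbound : ∀ q, brd T v1 v2 q → T.dist v2 q ≤ d - 2 := by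
      intro q hq
      have hg := glue hT hA12 hq hbrd_v0
      have e1 : T.dist v1 v0 = 1 := SimpleGraph.dist_comm.trans hd01
      have e2 : T.dist v2 q = T.dist q v2 := SimpleGraph.dist_comm
      have := hdle q v0
      omega
    have hex : ∃ x, T.Adj v2 x ∧ x ≠ v1 := by
      refine ⟨p.getVert 3, p.adj_getVert_succ (by omega), ?_⟩
      intro h
      have h3' := (hgv 3 (by omega)).1
      rw [h] at h3'
      have h1' := (hgv 1 (by omega)).1
      omega
    obtain ⟨Ssys, hS0, hS1, hS2, hS3, hS4⟩ := main_rec hT (d - 2) v1 v2 hA12 hbound hex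
    set Nset : Finset V := univ.filter (fun x => T.Adj v1 x ∧ x ≠ v2) with hNset
    have memN : ∀ b ∈ Nset.image (fun x => (x, (1:ℕ), x)),
        ∃ x, (T.Adj v1 x ∧ x ≠ v2) ∧ b = (x, (1:ℕ), x) := by
      intro b hb
      simp only [mem_image, hNset, mem_filter, mem_univ, true_and] at hb
      obtain ⟨x, h1', h2'⟩ := hb
      exact ⟨x, h1', h2'.symm⟩
    have memNI : ∀ x, T.Adj v1 x → x ≠ v2 → (x, (1:ℕ), x) ∈ Nset.image (fun x => (x, (1:ℕ), x)) := by
      intro x hx hxv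
      simp only [mem_image, hNset, mem_filter, mem_univ, true_and]
      exact ⟨x, ⟨hx, hxv⟩, rfl⟩
    -- neighbors of v1 are not in the branch
    have hNnotbrd : ∀ x, T.Adj v1 x → x ≠ v2 → ¬ brd T v1 v2 x := by
      intro x hx hxv
      unfold brd
      have e1 : T.dist x v1 = 1 := SimpleGraph.dist_eq_one_iff_adj.mpr hx.symm
      have e2 : T.dist x v2 = 2 := dist_children hT hx hA12 hxv
      omega
    -- balls of Ssys have their center in the branch, with controlled radius
    have hSfact : ∀ b ∈ Ssys, brd T v1 v2 b.1 ∧ 1 ≤ b.2.1 ∧ b.2.1 ≤ T.dist v2 b.1 := hS1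
    -- distances from outside the branch into the branch
    have hglueN : ∀ x, ¬ brd T v1 v2 x → ∀ q, brd T v1 v2 q →
        T.dist q x = T.dist q v2 + 1 + T.dist v1 x := by
      intro x hx q hq
      exact glue hT hA12 hq hx
    set sys : Finset (V × ℕ × V) := Nset.image (fun x => (x, 1, x)) ∪ Ssys with hsys
    have hGG : GlobalGood T sys := by
      refine ⟨?_, ?_, ?_, ?_⟩
      · -- injectivity
        intro b hb b' hb' hc
        rcases Finset.mem_union.mp hb with hbN | hbS <;>
          rcases Finset.mem_union.mp hb' with hb'N | hb'S
        · obtain ⟨x, _, rfl⟩ := memN b hbN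
          obtain ⟨x', _, rfl⟩ := memN b' hb'N
          simp only at hc
          rw [hc]
        · obtain ⟨x, hx, rfl⟩ := memN b hbN
          have := (hSfact b' hb'S).1
          rw [← hc] at this
          exact absurd this (hNnotbrd x hx.1 hx.2)
        · obtain ⟨x, hx, rfl⟩ := memN b' hb'N
          have := (hSfact b hbS).1
          rw [hc] at this
          exact absurd this (hNnotbrd x hx.1 hx.2)
        · exact hS0 b hbS b' hb'S hc
      · -- radii/eccentricity
        intro b hb
        rcases Finset.mem_union.mp hb with hbN | hbS
        · obtain ⟨x, hx, rfl⟩ := memN b hbN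
          have h1' : T.dist x v1 = 1 := SimpleGraph.dist_eq_one_iff_adj.mpr hx.1.symm
          have h2' : T.dist x v1 ≤ _root_.eccent T x := Finset.le_sup (Finset.mem_univ v1)
          exact ⟨le_refl 1, by show (1:ℕ) ≤ _root_.eccent T x; omega⟩
        · obtain ⟨hb1, hb2, hb3⟩ := hSfact b hbS
          refine ⟨hb2, ?_⟩
          have hg := hglueN v0 hbrd_v0 b.1 hb1
          have e1 : T.dist v1 v0 = 1 := SimpleGraph.dist_comm.trans hd01
          have e2 : T.dist b.1 v0 ≤ _root_.eccent T b.1 := Finset.le_sup (Finset.mem_univ v0)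
          have e3 : T.dist v2 b.1 = T.dist b.1 v2 := SimpleGraph.dist_comm
          omega
      · -- coverage
        intro u
        by_cases hu : brd T v1 v2 u
        · obtain ⟨b, hb, hble⟩ := hS2 u hu
          exact ⟨b, Finset.mem_union_right _ hb, hble⟩
        · have hg := hglueN u hu vd hbrd_vd
          have e1 : T.dist vd v2 = d - 2 := SimpleGraph.dist_comm.trans hd2d
          have e2 : T.dist vd u ≤ d := hdle vd u
          have hv1u : T.dist v1 u ≤ 1 := by omega
          by_cases huv : u = v1
          · refine ⟨(u1, 1, u1), Finset.mem_union_left _ (memNI u1 h1 hu1v2), ?_⟩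
            show T.dist u u1 ≤ 1
            subst huv
            have : T.dist v1 u1 = 1 := SimpleGraph.dist_eq_one_iff_adj.mpr h1
            omega
          · have hne0 : T.dist v1 u ≠ 0 := fun h =>
              huv (((hT.isConnected.dist_eq_zero_iff).mp h).symm)
            have hadju : T.Adj v1 u := by
              have : T.dist v1 u = 1 := by omega
              exact SimpleGraph.dist_eq_one_iff_adj.mp this
            have huv2 : u ≠ v2 := by
              intro h
              subst h
              exact hu (brd_self hT hA12)
            refine ⟨(u, 1, u), Finset.mem_union_left _ (memNI u hadju huv2), ?_⟩
            show T.dist u u ≤ 1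
            have : T.dist u u = 0 := SimpleGraph.dist_self
            omega
      · -- privates
        intro b hb
        rcases Finset.mem_union.mp hb with hbN | hbS
        · obtain ⟨x, hx, rfl⟩ := memN b hbN
          refine ⟨Or.inr ⟨rfl, rfl⟩, ?_⟩
          intro b' hb' hne'
          rcases Finset.mem_union.mp hb' with hb'N | hb'S
          · obtain ⟨x', hx', rfl⟩ := memN b' hb'N
            have hxx : x' ≠ x := by
              intro h
              subst h
              exact hne' rfl
            have := dist_children hT hx'.1 hx.1 hxx
            show (1:ℕ) < T.dist x' x
            omega
          · obtain ⟨hb1, hb2, hb3⟩ := hSfact b' hb'S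
            have hg := hglueN x (hNnotbrd x hx.1 hx.2) b'.1 hb1
            have e1 : T.dist v2 b'.1 = T.dist b'.1 v2 := SimpleGraph.dist_comm
            show b'.2.1 < T.dist b'.1 x
            omega
        · obtain ⟨hp1, hp2, hp3⟩ := hS4 b hbS
          refine ⟨hp2, ?_⟩
          intro b' hb' hne'
          rcases Finset.mem_union.mp hb' with hb'N | hb'S
          · obtain ⟨x', hx', rfl⟩ := memN b' hb'N
            have hg := hglueN x' (hNnotbrd x' hx'.1 hx'.2) b.2.2 hp1
            have e1 : T.dist b.2.2 x' = T.dist x' b.2.2 := SimpleGraph.dist_comm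
            have e2 : T.dist v1 x' = 1 := SimpleGraph.dist_eq_one_iff_adj.mpr hx'.1
            show (1:ℕ) < T.dist x' b.2.2
            omega
          · exact hp3 b' hb'S hne'
    have hcost : d + 1 ≤ ∑ b ∈ sys, b.2.1 := by
      have hdisj : Disjoint (Nset.image (fun x => (x, (1:ℕ), x))) Ssys := by
        rw [Finset.disjoint_left]
        intro b hbN hbS
        obtain ⟨x, hx, rfl⟩ := memN b hbN
        exact (hNnotbrd x hx.1 hx.2) (hSfact _ hbS).1
      have hsum : ∑ b ∈ sys, b.2.1 =
          (∑ b ∈ Nset.image (fun x => (x, (1:ℕ), x)), b.2.1) + ∑ b ∈ Ssys, b.2.1 := by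
        rw [hsys]
        exact Finset.sum_union hdisj
      have hsumN : (∑ b ∈ Nset.image (fun x => (x, (1:ℕ), x)), b.2.1) = Nset.card := by
        rw [Finset.sum_image]
        · simp
        · intro a _ b _ h
          simpa using congrArg Prod.fst h
      have hsubset : ({v0, u1, u2} : Finset V) ⊆ Nset := by
        intro x hx
        simp only [Finset.mem_insert, Finset.mem_singleton] at hx
        simp only [hNset, mem_filter, mem_univ, true_and]
        rcases hx with rfl | rfl | rfl
        · exact ⟨hv0adj, hv0v2⟩
        · exact ⟨h1, hu1v2⟩
        · exact ⟨h2, hu2v2⟩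
      have hcard3 : ({v0, u1, u2} : Finset V).card = 3 := by
        rw [Finset.card_insert_of_notMem, Finset.card_insert_of_notMem,
          Finset.card_singleton]
        · simp [hne]
        · simp
          exact ⟨hu1v0.symm, hu2v0.symm⟩
      have hcardN := Finset.card_le_card hsubset
      have hcostS := hS3 vd hbrd_vd
      omega
    have hub := upperBroadcast_ge hGG
    omega
end
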